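/- arXiv:1712.08840 — 5 statements merged into one kernel-verified Lean document; each statement's English description precedes it below -/
import Mathlib

section
/- For every integer l ≥ 1 there exists a constant C_l > 0 such that for every integer r ≥ 1 and every finite sequence a_1, …, a_r of nonnegative real numbers one has (∑_{i=1}^r a_i)^l ≤ C_l · ( ∑_{1 ≤ i_1 < i_2 < ⋯ < i_l ≤ r} a_{i_1} a_{i_2} ⋯ a_{i_l} + (max_{1 ≤ i ≤ r} a_i)^l ). -/
open Finset

private lemma ident {ι : Type*} [DecidableEq ι] (a : ι → ℝ) (l : ℕ) (s : Finset ι) :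
    ∑ i ∈ s, a i * ∑ t ∈ (s.erase i).powersetCard l, ∏ j ∈ t, a j
      = (l + 1 : ℝ) * ∑ u ∈ s.powersetCard (l + 1), ∏ j ∈ u, a j := by
  have L : ∑ i ∈ s, a i * ∑ t ∈ (s.erase i).powersetCard l, ∏ j ∈ t, a j
      = ∑ x ∈ s.sigma (fun i => (s.erase i).powersetCard l), ∏ j ∈ insert x.1 x.2, a j := by
    rw [Finset.sum_sigma]
    refine Finset.sum_congr rfl fun i hi => ?_
    rw [Finset.mul_sum]
    refine Finset.sum_congr rfl fun t ht => ?_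
    rw [Finset.mem_powersetCard] at ht
    rw [Finset.prod_insert (fun h => Finset.notMem_erase i s (ht.1 h))]
  have R : (l + 1 : ℝ) * ∑ u ∈ s.powersetCard (l + 1), ∏ j ∈ u, a j
      = ∑ x ∈ (s.powersetCard (l + 1)).sigma (fun u => u), ∏ j ∈ x.1, a j := by
    rw [Finset.sum_sigma, Finset.mul_sum]
    refine Finset.sum_congr rfl fun u hu => ?_
    rw [Finset.mem_powersetCard] at hu
    simp only [Finset.sum_const, hu.2, nsmul_eq_mul]
    push_cast
    ring
  rw [L, R]
  refine Finset.sum_nbij' (fun x => ⟨insert x.1 x.2, x.1⟩) (fun x => ⟨x.2, x.1.erase x.2⟩)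
    ?_ ?_ ?_ ?_ ?_
  · rintro ⟨i, t⟩ hx
    simp only [Finset.mem_sigma, Finset.mem_powersetCard] at hx ⊢
    obtain ⟨hi, hts, htc⟩ := hx
    have hit : i ∉ t := fun h => Finset.notMem_erase i s (hts h)
    refine ⟨⟨?_, ?_⟩, Finset.mem_insert_self _ _⟩
    · exact Finset.insert_subset hi (hts.trans (Finset.erase_subset i s))
    · rw [Finset.card_insert_of_notMem hit, htc]
  · rintro ⟨u, i⟩ hx
    simp only [Finset.mem_sigma, Finset.mem_powersetCard] at hx ⊢
    obtain ⟨⟨hus, huc⟩, hiu⟩ := hx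
    refine ⟨hus hiu, ?_, ?_⟩
    · exact Finset.erase_subset_erase i hus
    · rw [Finset.card_erase_of_mem hiu, huc]; rfl
  · rintro ⟨i, t⟩ hx
    simp only [Finset.mem_sigma, Finset.mem_powersetCard] at hx
    obtain ⟨hi, hts, htc⟩ := hx
    have hit : i ∉ t := fun h => Finset.notMem_erase i s (hts h)
    simp [Finset.erase_insert hit]
  · rintro ⟨u, i⟩ hx
    simp only [Finset.mem_sigma, Finset.mem_powersetCard] at hx
    obtain ⟨⟨hus, huc⟩, hiu⟩ := hx
    simp [Finset.insert_erase hiu]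
  · rintro ⟨i, t⟩ _
    rfl

private lemma key {ι : Type*} [DecidableEq ι] (a : ι → ℝ) (M : ℝ) (hM : 0 ≤ M)
    (ha : ∀ i, 0 ≤ a i) (haM : ∀ i, a i ≤ M) :
    ∀ (l : ℕ) (s : Finset ι),
      ∏ j ∈ Finset.range l, max (∑ i ∈ s, a i - j * M) 0
        ≤ (l.factorial : ℝ) * ∑ t ∈ s.powersetCard l, ∏ i ∈ t, a i := by
  intro l
  induction l with
  | zero => intro s; simp
  | succ l IH =>
    intro s
    have hS : (0 : ℝ) ≤ ∑ i ∈ s, a i := Finset.sum_nonneg fun i _ => ha i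
    rw [Finset.prod_range_succ']
    have h0 : max (∑ i ∈ s, a i - (0 : ℕ) * M) 0 = ∑ i ∈ s, a i := by
      simp [max_eq_left hS]
    rw [h0]
    have step1 : (∏ j ∈ Finset.range l, max (∑ i ∈ s, a i - (j + 1 : ℕ) * M) 0) * (∑ i ∈ s, a i)
        = ∑ i ∈ s, a i * ∏ j ∈ Finset.range l, max (∑ i ∈ s, a i - (j + 1 : ℕ) * M) 0 := by
      rw [mul_comm, Finset.sum_mul]
    rw [step1]
    have step2 : ∀ i ∈ s, a i * ∏ j ∈ Finset.range l, max (∑ k ∈ s, a k - (j + 1 : ℕ) * M) 0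
        ≤ a i * ((l.factorial : ℝ) * ∑ t ∈ (s.erase i).powersetCard l, ∏ k ∈ t, a k) := by
      intro i hi
      refine mul_le_mul_of_nonneg_left (le_trans ?_ (IH (s.erase i))) (ha i)
      refine Finset.prod_le_prod (fun j _ => le_max_right _ _) fun j _ => ?_
      refine max_le_max ?_ le_rfl
      rw [Finset.sum_erase_eq_sub hi]
      push_cast
      have := haM i
      linarith
    calc ∑ i ∈ s, a i * ∏ j ∈ Finset.range l, max (∑ k ∈ s, a k - (j + 1 : ℕ) * M) 0
        ≤ ∑ i ∈ s, a i * ((l.factorial : ℝ) * ∑ t ∈ (s.erase i).powersetCard l, ∏ k ∈ t, a k) :=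
          Finset.sum_le_sum step2
      _ = (l.factorial : ℝ) * ∑ i ∈ s, a i * ∑ t ∈ (s.erase i).powersetCard l, ∏ k ∈ t, a k := by
          rw [Finset.mul_sum]; refine Finset.sum_congr rfl fun i _ => by ring
      _ = (l.factorial : ℝ) * ((l + 1 : ℝ) * ∑ u ∈ s.powersetCard (l + 1), ∏ k ∈ u, a k) := by
          rw [ident]
      _ = ((l + 1).factorial : ℝ) * ∑ t ∈ s.powersetCard (l + 1), ∏ i ∈ t, a i := by
          rw [Nat.factorial_succ]
          push_cast
          ring

/-- For every integer `l ≥ 1` there exists `C_l > 0` such that for every `r ≥ 1`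
and every finite sequence `a_1, …, a_r` of nonnegative reals,
`(∑ a_i)^l ≤ C_l * (∑_{i_1 < ⋯ < i_l} a_{i_1} ⋯ a_{i_l} + (max_i a_i)^l)`. -/
theorem statement0 (l : ℕ) (hl : 1 ≤ l) :
    ∃ C : ℝ, 0 < C ∧ ∀ (r : ℕ) (hr : 1 ≤ r) (a : Fin r → ℝ), (∀ i, 0 ≤ a i) →
      (∑ i, a i) ^ l ≤
        C * ((∑ s ∈ Finset.powersetCard l (Finset.univ : Finset (Fin r)), ∏ i ∈ s, a i) +
          ((Finset.univ : Finset (Fin r)).sup' ⟨⟨0, hr⟩, Finset.mem_univ _⟩ a) ^ l) := by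
  refine ⟨(2 * l : ℝ) ^ l * l.factorial, ?_, ?_⟩
  · positivity
  intro r hr a ha
  set M := (Finset.univ : Finset (Fin r)).sup' ⟨⟨0, hr⟩, Finset.mem_univ _⟩ a with hMdef
  have hMle : ∀ i, a i ≤ M := fun i => Finset.le_sup' a (Finset.mem_univ i)
  have hM0 : 0 ≤ M := le_trans (ha ⟨0, hr⟩) (hMle ⟨0, hr⟩)
  set S := ∑ i, a i with hSdef
  have hS0 : 0 ≤ S := Finset.sum_nonneg fun i _ => ha i
  set e := ∑ s ∈ Finset.powersetCard l (Finset.univ : Finset (Fin r)), ∏ i ∈ s, a i with hedef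
  have he0 : 0 ≤ e :=
    Finset.sum_nonneg fun s _ => Finset.prod_nonneg fun i _ => ha i
  have hfac1 : (1 : ℝ) ≤ l.factorial := by exact_mod_cast Nat.one_le_iff_ne_zero.2 l.factorial_ne_zero
  by_cases hcase : S ≤ 2 * l * M
  · have h1 : S ^ l ≤ (2 * l * M) ^ l := pow_le_pow_left₀ hS0 hcase l
    have h2 : (2 * l * M) ^ l = (2 * l : ℝ) ^ l * M ^ l := mul_pow _ _ _
    calc S ^ l ≤ (2 * l : ℝ) ^ l * M ^ l := by rw [← h2]; exact h1
      _ ≤ (2 * l : ℝ) ^ l * l.factorial * (e + M ^ l) := by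
          have hp : (0 : ℝ) ≤ (2 * l : ℝ) ^ l := by positivity
          have hMl : (0:ℝ) ≤ M ^ l := by positivity
          nlinarith [mul_nonneg hp he0, mul_nonneg (mul_nonneg hp (sub_nonneg.2 hfac1)) hMl,
            mul_nonneg (mul_nonneg hp (sub_nonneg.2 hfac1)) he0]
  · push_neg at hcase
    have hkey := key a M hM0 ha hMle l (Finset.univ : Finset (Fin r))
    have hhalf : ∀ j ∈ Finset.range l, S / 2 ≤ max (S - j * M) 0 := by
      intro j hj
      rw [Finset.mem_range] at hj
      refine le_trans ?_ (le_max_left _ _)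
      have hjM : (j : ℝ) * M ≤ (l : ℝ) * M := by
        have : (j : ℝ) ≤ l := by exact_mod_cast hj.le
        nlinarith
      nlinarith
    have hprod : (S / 2) ^ l ≤ ∏ j ∈ Finset.range l, max (S - j * M) 0 := by
      have hc : (S / 2) ^ l = ∏ _j ∈ Finset.range l, (S / 2) := by
        rw [Finset.prod_const, Finset.card_range]
      rw [hc]
      refine Finset.prod_le_prod (fun j _ => by positivity) hhalf
      
    have h3 : (S / 2) ^ l ≤ (l.factorial : ℝ) * e := le_trans hprod hkey
    have hSl : S ^ l = 2 ^ l * (S / 2) ^ l := by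
      rw [← _root_.mul_pow]; congr 1; ring
    have h4 : S ^ l ≤ 2 ^ l * ((l.factorial : ℝ) * e) := by
      rw [hSl]
      exact mul_le_mul_of_nonneg_left h3 (by positivity)
    have h5 : (2 : ℝ) ^ l ≤ (2 * l : ℝ) ^ l := by
      refine pow_le_pow_left₀ (by norm_num) ?_ l
      have : (1 : ℝ) ≤ l := by exact_mod_cast hl
      nlinarith
    calc S ^ l ≤ 2 ^ l * ((l.factorial : ℝ) * e) := h4
      _ ≤ (2 * l : ℝ) ^ l * l.factorial * e := by
          nlinarith [mul_nonneg (sub_nonneg.2 h5) (mul_nonneg (le_trans zero_le_one hfac1) he0)]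
      _ ≤ (2 * l : ℝ) ^ l * l.factorial * (e + M ^ l) := by
          have hMl : (0:ℝ) ≤ M ^ l := by positivity
          nlinarith [mul_nonneg (mul_nonneg (by positivity : (0:ℝ) ≤ (2*l:ℝ)^l) (le_trans zero_le_one hfac1)) hMl]
end

section
/- There is an absolute constant C > 0 such that for every real M ≥ 2, ∑_{1 ≤ m_1, m_2, m_3 ≤ M} 1/lcm(m_1, m_2, m_3) ≤ C (log M)^7, where the sum is over all triples of positive integers m_1, m_2, m_3 at most M. -/
open Finset

namespace St1

def E (m1 m2 m3 : ℕ) : ℕ := Nat.gcd (Nat.gcd m1 m2) m3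
def F12 (m1 m2 m3 : ℕ) : ℕ := Nat.gcd m1 m2 / E m1 m2 m3
def F13 (m1 m2 m3 : ℕ) : ℕ := Nat.gcd m1 m3 / E m1 m2 m3
def F23 (m1 m2 m3 : ℕ) : ℕ := Nat.gcd m2 m3 / E m1 m2 m3
def A (m1 m2 m3 : ℕ) : ℕ := m1 / (E m1 m2 m3 * F12 m1 m2 m3 * F13 m1 m2 m3)
def B (m1 m2 m3 : ℕ) : ℕ := m2 / (E m1 m2 m3 * F12 m1 m2 m3 * F23 m1 m2 m3)
def C (m1 m2 m3 : ℕ) : ℕ := m3 / (E m1 m2 m3 * F13 m1 m2 m3 * F23 m1 m2 m3)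

lemma idII {m1 m2 m3 : ℕ} (h1 : m1 ≠ 0) (h2 : m2 ≠ 0) (h3 : m3 ≠ 0) :
    Nat.gcd (Nat.lcm m1 m2) m3 * Nat.gcd (Nat.gcd m1 m2) m3
      = Nat.gcd m1 m3 * Nat.gcd m2 m3 := by
  have hl : Nat.lcm m1 m2 ≠ 0 := Nat.lcm_ne_zero h1 h2
  have hg : Nat.gcd m1 m2 ≠ 0 := Nat.gcd_ne_zero_left h1
  apply Nat.eq_of_factorization_eq
  · exact Nat.mul_ne_zero (Nat.gcd_ne_zero_right h3) (Nat.gcd_ne_zero_right h3)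
  · exact Nat.mul_ne_zero (Nat.gcd_ne_zero_right h3) (Nat.gcd_ne_zero_right h3)
  intro p
  rw [Nat.factorization_mul (Nat.gcd_ne_zero_right h3) (Nat.gcd_ne_zero_right h3),
    Nat.factorization_mul (Nat.gcd_ne_zero_right h3) (Nat.gcd_ne_zero_right h3),
    Nat.factorization_gcd hl h3, Nat.factorization_gcd hg h3,
    Nat.factorization_gcd h1 h3, Nat.factorization_gcd h2 h3,
    Nat.factorization_lcm h1 h2, Nat.factorization_gcd h1 h2]
  simp only [Finsupp.add_apply, Finsupp.inf_apply, Finsupp.sup_apply]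
  omega

-- E is the gcd of any two of the pairwise gcds
lemma e_gcd12_13 {m1 m2 m3 : ℕ} (h1 : m1 ≠ 0) (h2 : m2 ≠ 0) (h3 : m3 ≠ 0) :
    Nat.gcd (Nat.gcd m1 m2) (Nat.gcd m1 m3) = E m1 m2 m3 := by
  apply Nat.eq_of_factorization_eq (Nat.gcd_ne_zero_left (Nat.gcd_ne_zero_left h1))
    (Nat.gcd_ne_zero_right h3)
  intro p
  rw [Nat.factorization_gcd (Nat.gcd_ne_zero_left h1) (Nat.gcd_ne_zero_left h1),
    Nat.factorization_gcd (Nat.gcd_ne_zero_left h1) h3,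
    Nat.factorization_gcd h1 h2, Nat.factorization_gcd h1 h3]
  simp only [Finsupp.inf_apply]
  omega

lemma e_gcd12_23 {m1 m2 m3 : ℕ} (h1 : m1 ≠ 0) (h2 : m2 ≠ 0) (h3 : m3 ≠ 0) :
    Nat.gcd (Nat.gcd m1 m2) (Nat.gcd m2 m3) = E m1 m2 m3 := by
  apply Nat.eq_of_factorization_eq (Nat.gcd_ne_zero_left (Nat.gcd_ne_zero_left h1))
    (Nat.gcd_ne_zero_right h3)
  intro p
  rw [Nat.factorization_gcd (Nat.gcd_ne_zero_left h1) (Nat.gcd_ne_zero_left h2),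
    Nat.factorization_gcd (Nat.gcd_ne_zero_left h1) h3,
    Nat.factorization_gcd h1 h2, Nat.factorization_gcd h2 h3]
  simp only [Finsupp.inf_apply]
  omega

lemma e_gcd13_23 {m1 m2 m3 : ℕ} (h1 : m1 ≠ 0) (h2 : m2 ≠ 0) (h3 : m3 ≠ 0) :
    Nat.gcd (Nat.gcd m1 m3) (Nat.gcd m2 m3) = E m1 m2 m3 := by
  apply Nat.eq_of_factorization_eq (Nat.gcd_ne_zero_left (Nat.gcd_ne_zero_left h1))
    (Nat.gcd_ne_zero_right h3)
  intro p
  rw [Nat.factorization_gcd (Nat.gcd_ne_zero_left h1) (Nat.gcd_ne_zero_left h2),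
    Nat.factorization_gcd (Nat.gcd_ne_zero_left h1) h3,
    Nat.factorization_gcd h1 h3, Nat.factorization_gcd h2 h3, Nat.factorization_gcd h1 h2]
  simp only [Finsupp.inf_apply]
  omega

lemma e_pos {m1 m2 m3 : ℕ} (h1 : 0 < m1) (h2 : 0 < m2) (h3 : 0 < m3) : 0 < E m1 m2 m3 :=
  Nat.gcd_pos_of_pos_right _ h3

lemma e_dvd_g12 {m1 m2 m3 : ℕ} : E m1 m2 m3 ∣ Nat.gcd m1 m2 := Nat.gcd_dvd_left _ _

lemma e_dvd_g13 {m1 m2 m3 : ℕ} (h1 : m1 ≠ 0) (h2 : m2 ≠ 0) (h3 : m3 ≠ 0) :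
    E m1 m2 m3 ∣ Nat.gcd m1 m3 := by
  rw [← e_gcd12_13 h1 h2 h3]; exact Nat.gcd_dvd_right _ _

lemma e_dvd_g23 {m1 m2 m3 : ℕ} (h1 : m1 ≠ 0) (h2 : m2 ≠ 0) (h3 : m3 ≠ 0) :
    E m1 m2 m3 ∣ Nat.gcd m2 m3 := by
  rw [← e_gcd12_23 h1 h2 h3]; exact Nat.gcd_dvd_right _ _

-- e * f12 * f13 = lcm (gcd m1 m2) (gcd m1 m3)
lemma eff_eq_lcm12_13 {m1 m2 m3 : ℕ} (h1 : m1 ≠ 0) (h2 : m2 ≠ 0) (h3 : m3 ≠ 0) :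
    E m1 m2 m3 * F12 m1 m2 m3 * F13 m1 m2 m3 = Nat.lcm (Nat.gcd m1 m2) (Nat.gcd m1 m3) := by
  have he : 0 < E m1 m2 m3 := e_pos (Nat.pos_of_ne_zero h1) (Nat.pos_of_ne_zero h2) (Nat.pos_of_ne_zero h3)
  apply Nat.eq_of_mul_eq_mul_left he
  have h12 : E m1 m2 m3 * F12 m1 m2 m3 = Nat.gcd m1 m2 := Nat.mul_div_cancel' e_dvd_g12
  have h13 : E m1 m2 m3 * F13 m1 m2 m3 = Nat.gcd m1 m3 := Nat.mul_div_cancel' (e_dvd_g13 h1 h2 h3)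
  calc E m1 m2 m3 * (E m1 m2 m3 * F12 m1 m2 m3 * F13 m1 m2 m3)
      = (E m1 m2 m3 * F12 m1 m2 m3) * (E m1 m2 m3 * F13 m1 m2 m3) := by ring
    _ = Nat.gcd m1 m2 * Nat.gcd m1 m3 := by rw [h12, h13]
    _ = Nat.gcd (Nat.gcd m1 m2) (Nat.gcd m1 m3) * Nat.lcm (Nat.gcd m1 m2) (Nat.gcd m1 m3) :=
        (Nat.gcd_mul_lcm _ _).symm
    _ = E m1 m2 m3 * Nat.lcm (Nat.gcd m1 m2) (Nat.gcd m1 m3) := by rw [e_gcd12_13 h1 h2 h3]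

lemma eff_eq_lcm12_23 {m1 m2 m3 : ℕ} (h1 : m1 ≠ 0) (h2 : m2 ≠ 0) (h3 : m3 ≠ 0) :
    E m1 m2 m3 * F12 m1 m2 m3 * F23 m1 m2 m3 = Nat.lcm (Nat.gcd m1 m2) (Nat.gcd m2 m3) := by
  have he : 0 < E m1 m2 m3 := e_pos (Nat.pos_of_ne_zero h1) (Nat.pos_of_ne_zero h2) (Nat.pos_of_ne_zero h3)
  apply Nat.eq_of_mul_eq_mul_left he
  have h12 : E m1 m2 m3 * F12 m1 m2 m3 = Nat.gcd m1 m2 := Nat.mul_div_cancel' e_dvd_g12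
  have h23 : E m1 m2 m3 * F23 m1 m2 m3 = Nat.gcd m2 m3 := Nat.mul_div_cancel' (e_dvd_g23 h1 h2 h3)
  calc E m1 m2 m3 * (E m1 m2 m3 * F12 m1 m2 m3 * F23 m1 m2 m3)
      = (E m1 m2 m3 * F12 m1 m2 m3) * (E m1 m2 m3 * F23 m1 m2 m3) := by ring
    _ = Nat.gcd m1 m2 * Nat.gcd m2 m3 := by rw [h12, h23]
    _ = Nat.gcd (Nat.gcd m1 m2) (Nat.gcd m2 m3) * Nat.lcm (Nat.gcd m1 m2) (Nat.gcd m2 m3) :=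
        (Nat.gcd_mul_lcm _ _).symm
    _ = E m1 m2 m3 * Nat.lcm (Nat.gcd m1 m2) (Nat.gcd m2 m3) := by rw [e_gcd12_23 h1 h2 h3]

lemma eff_eq_lcm13_23 {m1 m2 m3 : ℕ} (h1 : m1 ≠ 0) (h2 : m2 ≠ 0) (h3 : m3 ≠ 0) :
    E m1 m2 m3 * F13 m1 m2 m3 * F23 m1 m2 m3 = Nat.lcm (Nat.gcd m1 m3) (Nat.gcd m2 m3) := by
  have he : 0 < E m1 m2 m3 := e_pos (Nat.pos_of_ne_zero h1) (Nat.pos_of_ne_zero h2) (Nat.pos_of_ne_zero h3)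
  apply Nat.eq_of_mul_eq_mul_left he
  have h13 : E m1 m2 m3 * F13 m1 m2 m3 = Nat.gcd m1 m3 := Nat.mul_div_cancel' (e_dvd_g13 h1 h2 h3)
  have h23 : E m1 m2 m3 * F23 m1 m2 m3 = Nat.gcd m2 m3 := Nat.mul_div_cancel' (e_dvd_g23 h1 h2 h3)
  calc E m1 m2 m3 * (E m1 m2 m3 * F13 m1 m2 m3 * F23 m1 m2 m3)
      = (E m1 m2 m3 * F13 m1 m2 m3) * (E m1 m2 m3 * F23 m1 m2 m3) := by ring
    _ = Nat.gcd m1 m3 * Nat.gcd m2 m3 := by rw [h13, h23]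
    _ = Nat.gcd (Nat.gcd m1 m3) (Nat.gcd m2 m3) * Nat.lcm (Nat.gcd m1 m3) (Nat.gcd m2 m3) :=
        (Nat.gcd_mul_lcm _ _).symm
    _ = E m1 m2 m3 * Nat.lcm (Nat.gcd m1 m3) (Nat.gcd m2 m3) := by rw [e_gcd13_23 h1 h2 h3]

lemma dvd1 {m1 m2 m3 : ℕ} (h1 : m1 ≠ 0) (h2 : m2 ≠ 0) (h3 : m3 ≠ 0) :
    E m1 m2 m3 * F12 m1 m2 m3 * F13 m1 m2 m3 ∣ m1 := by
  rw [eff_eq_lcm12_13 h1 h2 h3]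
  exact Nat.lcm_dvd (Nat.gcd_dvd_left _ _) (Nat.gcd_dvd_left _ _)

lemma dvd2 {m1 m2 m3 : ℕ} (h1 : m1 ≠ 0) (h2 : m2 ≠ 0) (h3 : m3 ≠ 0) :
    E m1 m2 m3 * F12 m1 m2 m3 * F23 m1 m2 m3 ∣ m2 := by
  rw [eff_eq_lcm12_23 h1 h2 h3]
  exact Nat.lcm_dvd (Nat.gcd_dvd_right _ _) (Nat.gcd_dvd_left _ _)

lemma dvd3 {m1 m2 m3 : ℕ} (h1 : m1 ≠ 0) (h2 : m2 ≠ 0) (h3 : m3 ≠ 0) :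
    E m1 m2 m3 * F13 m1 m2 m3 * F23 m1 m2 m3 ∣ m3 := by
  rw [eff_eq_lcm13_23 h1 h2 h3]
  exact Nat.lcm_dvd (Nat.gcd_dvd_right _ _) (Nat.gcd_dvd_right _ _)

lemma rec1 {m1 m2 m3 : ℕ} (h1 : m1 ≠ 0) (h2 : m2 ≠ 0) (h3 : m3 ≠ 0) :
    E m1 m2 m3 * F12 m1 m2 m3 * F13 m1 m2 m3 * A m1 m2 m3 = m1 :=
  Nat.mul_div_cancel' (dvd1 h1 h2 h3)

lemma rec2 {m1 m2 m3 : ℕ} (h1 : m1 ≠ 0) (h2 : m2 ≠ 0) (h3 : m3 ≠ 0) :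
    E m1 m2 m3 * F12 m1 m2 m3 * F23 m1 m2 m3 * B m1 m2 m3 = m2 :=
  Nat.mul_div_cancel' (dvd2 h1 h2 h3)

lemma rec3 {m1 m2 m3 : ℕ} (h1 : m1 ≠ 0) (h2 : m2 ≠ 0) (h3 : m3 ≠ 0) :
    E m1 m2 m3 * F13 m1 m2 m3 * F23 m1 m2 m3 * C m1 m2 m3 = m3 :=
  Nat.mul_div_cancel' (dvd3 h1 h2 h3)

-- identity I : L * g12 * g13 * g23 = m1*m2*m3*e
lemma idI {m1 m2 m3 : ℕ} (h1 : m1 ≠ 0) (h2 : m2 ≠ 0) (h3 : m3 ≠ 0) :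
    Nat.lcm (Nat.lcm m1 m2) m3 * Nat.gcd m1 m2 * Nat.gcd m1 m3 * Nat.gcd m2 m3
      = m1 * m2 * m3 * E m1 m2 m3 := by
  have k1 : Nat.gcd (Nat.lcm m1 m2) m3 * Nat.lcm (Nat.lcm m1 m2) m3 = Nat.lcm m1 m2 * m3 :=
    Nat.gcd_mul_lcm _ _
  have k2 : Nat.gcd m1 m2 * Nat.lcm m1 m2 = m1 * m2 := Nat.gcd_mul_lcm _ _
  have k3 := idII h1 h2 h3
  calc Nat.lcm (Nat.lcm m1 m2) m3 * Nat.gcd m1 m2 * Nat.gcd m1 m3 * Nat.gcd m2 m3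
      = Nat.lcm (Nat.lcm m1 m2) m3 * Nat.gcd m1 m2 * (Nat.gcd m1 m3 * Nat.gcd m2 m3) := by ring
    _ = Nat.lcm (Nat.lcm m1 m2) m3 * Nat.gcd m1 m2 *
          (Nat.gcd (Nat.lcm m1 m2) m3 * Nat.gcd (Nat.gcd m1 m2) m3) := by rw [k3]
    _ = (Nat.gcd (Nat.lcm m1 m2) m3 * Nat.lcm (Nat.lcm m1 m2) m3) * Nat.gcd m1 m2 *
          Nat.gcd (Nat.gcd m1 m2) m3 := by ring
    _ = Nat.lcm m1 m2 * m3 * Nat.gcd m1 m2 * Nat.gcd (Nat.gcd m1 m2) m3 := by rw [k1]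
    _ = (Nat.gcd m1 m2 * Nat.lcm m1 m2) * m3 * Nat.gcd (Nat.gcd m1 m2) m3 := by ring
    _ = m1 * m2 * m3 * E m1 m2 m3 := by rw [k2]; rfl

lemma f12_pos {m1 m2 m3 : ℕ} (h1 : m1 ≠ 0) (h2 : m2 ≠ 0) (h3 : m3 ≠ 0) : 0 < F12 m1 m2 m3 :=
  Nat.div_pos (Nat.le_of_dvd (Nat.gcd_pos_of_pos_left _ (Nat.pos_of_ne_zero h1)) e_dvd_g12)
    (e_pos (Nat.pos_of_ne_zero h1) (Nat.pos_of_ne_zero h2) (Nat.pos_of_ne_zero h3))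

lemma f13_pos {m1 m2 m3 : ℕ} (h1 : m1 ≠ 0) (h2 : m2 ≠ 0) (h3 : m3 ≠ 0) : 0 < F13 m1 m2 m3 :=
  Nat.div_pos (Nat.le_of_dvd (Nat.gcd_pos_of_pos_left _ (Nat.pos_of_ne_zero h1)) (e_dvd_g13 h1 h2 h3))
    (e_pos (Nat.pos_of_ne_zero h1) (Nat.pos_of_ne_zero h2) (Nat.pos_of_ne_zero h3))

lemma f23_pos {m1 m2 m3 : ℕ} (h1 : m1 ≠ 0) (h2 : m2 ≠ 0) (h3 : m3 ≠ 0) : 0 < F23 m1 m2 m3 :=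
  Nat.div_pos (Nat.le_of_dvd (Nat.gcd_pos_of_pos_left _ (Nat.pos_of_ne_zero h2)) (e_dvd_g23 h1 h2 h3))
    (e_pos (Nat.pos_of_ne_zero h1) (Nat.pos_of_ne_zero h2) (Nat.pos_of_ne_zero h3))

-- the main factorization of the lcm
lemma lcm_eq {m1 m2 m3 : ℕ} (h1 : m1 ≠ 0) (h2 : m2 ≠ 0) (h3 : m3 ≠ 0) :
    Nat.lcm (Nat.lcm m1 m2) m3
      = E m1 m2 m3 * F12 m1 m2 m3 * F13 m1 m2 m3 * F23 m1 m2 m3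
        * (A m1 m2 m3 * B m1 m2 m3 * C m1 m2 m3) := by
  have hI := idI h1 h2 h3
  have h12 : E m1 m2 m3 * F12 m1 m2 m3 = Nat.gcd m1 m2 := Nat.mul_div_cancel' e_dvd_g12
  have h13 : E m1 m2 m3 * F13 m1 m2 m3 = Nat.gcd m1 m3 := Nat.mul_div_cancel' (e_dvd_g13 h1 h2 h3)
  have h23 : E m1 m2 m3 * F23 m1 m2 m3 = Nat.gcd m2 m3 := Nat.mul_div_cancel' (e_dvd_g23 h1 h2 h3)
  have r1 := rec1 h1 h2 h3
  have r2 := rec2 h1 h2 h3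
  have r3 := rec3 h1 h2 h3
  have he : 0 < E m1 m2 m3 :=
    e_pos (Nat.pos_of_ne_zero h1) (Nat.pos_of_ne_zero h2) (Nat.pos_of_ne_zero h3)
  have hf12 := f12_pos h1 h2 h3
  have hf13 := f13_pos h1 h2 h3
  have hf23 := f23_pos h1 h2 h3
  set e := E m1 m2 m3 with hedef
  set f12 := F12 m1 m2 m3 with hf12def
  set f13 := F13 m1 m2 m3 with hf13def
  set f23 := F23 m1 m2 m3 with hf23def
  set a := A m1 m2 m3 with hadef
  set b := B m1 m2 m3 with hbdef
  set c := C m1 m2 m3 with hcdef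
  have hk : 0 < e * e * e * f12 * f13 * f23 := by positivity
  apply Nat.eq_of_mul_eq_mul_left hk
  calc (e * e * e * f12 * f13 * f23) * Nat.lcm (Nat.lcm m1 m2) m3
      = Nat.lcm (Nat.lcm m1 m2) m3 * (e * f12) * (e * f13) * (e * f23) := by ring
    _ = Nat.lcm (Nat.lcm m1 m2) m3 * Nat.gcd m1 m2 * Nat.gcd m1 m3 * Nat.gcd m2 m3 := by
        rw [h12, h13, h23]
    _ = m1 * m2 * m3 * e := hI
    _ = (e * f12 * f13 * a) * (e * f12 * f23 * b) * (e * f13 * f23 * c) * e := by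
        rw [r1, r2, r3]
    _ = (e * e * e * f12 * f13 * f23) * (e * f12 * f13 * f23 * (a * b * c)) := by ring


def Ft (p : ℕ × ℕ × ℕ) : ℕ × ℕ × ℕ × ℕ × ℕ × ℕ × ℕ :=
  (E p.1 p.2.1 p.2.2, F12 p.1 p.2.1 p.2.2, F13 p.1 p.2.1 p.2.2, F23 p.1 p.2.1 p.2.2,
    A p.1 p.2.1 p.2.2, B p.1 p.2.1 p.2.2, C p.1 p.2.1 p.2.2)

noncomputable def g (y : ℕ × ℕ × ℕ × ℕ × ℕ × ℕ × ℕ) : ℝ :=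
  (1 / y.1) * ((1 / y.2.1) * ((1 / y.2.2.1) * ((1 / y.2.2.2.1) *
    ((1 / y.2.2.2.2.1) * ((1 / y.2.2.2.2.2.1) * (1 / y.2.2.2.2.2.2))))))

lemma summand_eq {m1 m2 m3 : ℕ} (h1 : m1 ≠ 0) (h2 : m2 ≠ 0) (h3 : m3 ≠ 0) :
    (1 : ℝ) / (Nat.lcm (Nat.lcm m1 m2) m3 : ℝ) = g (Ft (m1, m2, m3)) := by
  rw [g, Ft]
  simp only
  rw [lcm_eq h1 h2 h3]
  push_cast
  ring

lemma a_dvd {m1 m2 m3 : ℕ} (h1 : m1 ≠ 0) (h2 : m2 ≠ 0) (h3 : m3 ≠ 0) : A m1 m2 m3 ∣ m1 :=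
  ⟨E m1 m2 m3 * F12 m1 m2 m3 * F13 m1 m2 m3, (rec1 h1 h2 h3).symm.trans (mul_comm _ _)⟩

lemma b_dvd {m1 m2 m3 : ℕ} (h1 : m1 ≠ 0) (h2 : m2 ≠ 0) (h3 : m3 ≠ 0) : B m1 m2 m3 ∣ m2 :=
  ⟨E m1 m2 m3 * F12 m1 m2 m3 * F23 m1 m2 m3, (rec2 h1 h2 h3).symm.trans (mul_comm _ _)⟩

lemma c_dvd {m1 m2 m3 : ℕ} (h1 : m1 ≠ 0) (h2 : m2 ≠ 0) (h3 : m3 ≠ 0) : C m1 m2 m3 ∣ m3 :=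
  ⟨E m1 m2 m3 * F13 m1 m2 m3 * F23 m1 m2 m3, (rec3 h1 h2 h3).symm.trans (mul_comm _ _)⟩

lemma a_pos {m1 m2 m3 : ℕ} (h1 : m1 ≠ 0) (h2 : m2 ≠ 0) (h3 : m3 ≠ 0) : 0 < A m1 m2 m3 := by
  rcases Nat.eq_zero_or_pos (A m1 m2 m3) with h | h
  · exfalso; apply h1; rw [← rec1 h1 h2 h3, h, mul_zero]
  · exact h

lemma b_pos {m1 m2 m3 : ℕ} (h1 : m1 ≠ 0) (h2 : m2 ≠ 0) (h3 : m3 ≠ 0) : 0 < B m1 m2 m3 := by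
  rcases Nat.eq_zero_or_pos (B m1 m2 m3) with h | h
  · exfalso; apply h2; rw [← rec2 h1 h2 h3, h, mul_zero]
  · exact h

lemma c_pos {m1 m2 m3 : ℕ} (h1 : m1 ≠ 0) (h2 : m2 ≠ 0) (h3 : m3 ≠ 0) : 0 < C m1 m2 m3 := by
  rcases Nat.eq_zero_or_pos (C m1 m2 m3) with h | h
  · exfalso; apply h3; rw [← rec3 h1 h2 h3, h, mul_zero]
  · exact h

lemma ft_mem {N : ℕ} {p : ℕ × ℕ × ℕ}
    (hp : p ∈ Finset.Icc 1 N ×ˢ (Finset.Icc 1 N ×ˢ Finset.Icc 1 N)) :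
    Ft p ∈ Finset.Icc 1 N ×ˢ (Finset.Icc 1 N ×ˢ (Finset.Icc 1 N ×ˢ (Finset.Icc 1 N ×ˢ
      (Finset.Icc 1 N ×ˢ (Finset.Icc 1 N ×ˢ Finset.Icc 1 N))))) := by
  obtain ⟨m1, m2, m3⟩ := p
  simp only [Finset.mem_product, Finset.mem_Icc] at hp
  obtain ⟨⟨hm1, hm1'⟩, ⟨hm2, hm2'⟩, ⟨hm3, hm3'⟩⟩ := hp
  have h1 : m1 ≠ 0 := by omega
  have h2 : m2 ≠ 0 := by omega
  have h3 : m3 ≠ 0 := by omega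
  have hp1 := Nat.pos_of_ne_zero h1
  have hp2 := Nat.pos_of_ne_zero h2
  have hp3 := Nat.pos_of_ne_zero h3
  simp only [Ft, Finset.mem_product, Finset.mem_Icc]
  refine ⟨⟨e_pos hp1 hp2 hp3, ?_⟩, ⟨f12_pos h1 h2 h3, ?_⟩, ⟨f13_pos h1 h2 h3, ?_⟩,
    ⟨f23_pos h1 h2 h3, ?_⟩, ⟨a_pos h1 h2 h3, ?_⟩, ⟨b_pos h1 h2 h3, ?_⟩, ⟨c_pos h1 h2 h3, ?_⟩⟩
  · exact le_trans (Nat.le_of_dvd hp3 (Nat.gcd_dvd_right _ _)) hm3'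
  · exact le_trans (Nat.le_of_dvd hp1
      ((Nat.div_dvd_of_dvd e_dvd_g12).trans (Nat.gcd_dvd_left _ _))) hm1'
  · exact le_trans (Nat.le_of_dvd hp1
      ((Nat.div_dvd_of_dvd (e_dvd_g13 h1 h2 h3)).trans (Nat.gcd_dvd_left _ _))) hm1'
  · exact le_trans (Nat.le_of_dvd hp2
      ((Nat.div_dvd_of_dvd (e_dvd_g23 h1 h2 h3)).trans (Nat.gcd_dvd_left _ _))) hm2'
  · exact le_trans (Nat.le_of_dvd hp1 (a_dvd h1 h2 h3)) hm1'
  · exact le_trans (Nat.le_of_dvd hp2 (b_dvd h1 h2 h3)) hm2'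
  · exact le_trans (Nat.le_of_dvd hp3 (c_dvd h1 h2 h3)) hm3'

lemma ft_inj {N : ℕ} : ∀ p ∈ Finset.Icc 1 N ×ˢ (Finset.Icc 1 N ×ˢ Finset.Icc 1 N),
    ∀ q ∈ Finset.Icc 1 N ×ˢ (Finset.Icc 1 N ×ˢ Finset.Icc 1 N), Ft p = Ft q → p = q := by
  rintro ⟨p1, p2, p3⟩ hp ⟨q1, q2, q3⟩ hq h
  simp only [Finset.mem_product, Finset.mem_Icc] at hp hq
  have hp1 : p1 ≠ 0 := by omega
  have hp2 : p2 ≠ 0 := by omega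
  have hp3 : p3 ≠ 0 := by omega
  have hq1 : q1 ≠ 0 := by omega
  have hq2 : q2 ≠ 0 := by omega
  have hq3 : q3 ≠ 0 := by omega
  simp only [Ft, Prod.mk.injEq] at h
  obtain ⟨hE, hF12, hF13, hF23, hA, hB, hC⟩ := h
  have e1 : p1 = q1 := by
    rw [← rec1 hp1 hp2 hp3, ← rec1 hq1 hq2 hq3, hE, hF12, hF13, hA]
  have e2 : p2 = q2 := by
    rw [← rec2 hp1 hp2 hp3, ← rec2 hq1 hq2 hq3, hE, hF12, hF23, hB]
  have e3 : p3 = q3 := by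
    rw [← rec3 hp1 hp2 hp3, ← rec3 hq1 hq2 hq3, hE, hF13, hF23, hC]
  simp [e1, e2, e3]

end St1


/-- There is an absolute constant `C > 0` such that for every real `M ≥ 2`,
`∑_{1 ≤ m₁, m₂, m₃ ≤ M} 1 / lcm(m₁, m₂, m₃) ≤ C (log M)^7`. -/
theorem statement1 : ∃ C : ℝ, 0 < C ∧ ∀ M : ℝ, 2 ≤ M →
    ∑ m₁ ∈ Finset.Icc 1 ⌊M⌋₊, ∑ m₂ ∈ Finset.Icc 1 ⌊M⌋₊, ∑ m₃ ∈ Finset.Icc 1 ⌊M⌋₊,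
      (1 : ℝ) / (Nat.lcm (Nat.lcm m₁ m₂) m₃ : ℝ) ≤ C * Real.log M ^ 7 := by
  classical
  refine ⟨2187, by norm_num, fun M hM => ?_⟩
  have hM0 : (0 : ℝ) < M := by linarith
  set N := ⌊M⌋₊ with hNdef
  have hN2 : 2 ≤ N := Nat.le_floor (by exact_mod_cast hM)
  set H : ℝ := ∑ d ∈ Finset.Icc 1 N, ((d : ℝ))⁻¹ with hH
  set T := Finset.Icc 1 N ×ˢ (Finset.Icc 1 N ×ˢ Finset.Icc 1 N) with hT
  set U := Finset.Icc 1 N ×ˢ (Finset.Icc 1 N ×ˢ (Finset.Icc 1 N ×ˢ (Finset.Icc 1 N ×ˢ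
      (Finset.Icc 1 N ×ˢ (Finset.Icc 1 N ×ˢ Finset.Icc 1 N))))) with hU
  have key : ∑ m₁ ∈ Finset.Icc 1 N, ∑ m₂ ∈ Finset.Icc 1 N, ∑ m₃ ∈ Finset.Icc 1 N,
      (1 : ℝ) / (Nat.lcm (Nat.lcm m₁ m₂) m₃ : ℝ) ≤ H ^ 7 := by
    calc ∑ m₁ ∈ Finset.Icc 1 N, ∑ m₂ ∈ Finset.Icc 1 N, ∑ m₃ ∈ Finset.Icc 1 N,
          (1 : ℝ) / (Nat.lcm (Nat.lcm m₁ m₂) m₃ : ℝ)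
        = ∑ p ∈ T, (1 : ℝ) / (Nat.lcm (Nat.lcm p.1 p.2.1) p.2.2 : ℝ) := by
          rw [hT]
          simp only [Finset.sum_product]
      _ = ∑ p ∈ T, St1.g (St1.Ft p) := by
          refine Finset.sum_congr rfl fun p hp => ?_
          obtain ⟨m1, m2, m3⟩ := p
          simp only [hT, Finset.mem_product, Finset.mem_Icc] at hp
          have h1 : m1 ≠ 0 := by omega
          have h2 : m2 ≠ 0 := by omega
          have h3 : m3 ≠ 0 := by omega
          exact St1.summand_eq h1 h2 h3
      _ = ∑ y ∈ T.image St1.Ft, St1.g y := (Finset.sum_image St1.ft_inj).symm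
      _ ≤ ∑ y ∈ U, St1.g y := by
          refine Finset.sum_le_sum_of_subset_of_nonneg ?_ ?_
          · intro y hy
            obtain ⟨p, hp, rfl⟩ := Finset.mem_image.mp hy
            exact St1.ft_mem hp
          · intro y _ _
            have : (0:ℝ) ≤ St1.g y := by
              rw [St1.g]
              positivity
            exact this
      _ = H ^ 7 := by
          rw [hU]
          simp only [St1.g, Finset.sum_product, one_div]
          simp only [← Finset.mul_sum]
          simp only [← Finset.sum_mul]
          rw [← hH]
          ring
  have hHnn : 0 ≤ H := by
    rw [hH]
    positivity
  have hlog2 : (0.6931471803 : ℝ) < Real.log 2 := Real.log_two_gt_d9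
  have hlogM2 : Real.log 2 ≤ Real.log M := Real.log_le_log (by norm_num) hM
  have hlogN : Real.log N ≤ Real.log M := by
    apply Real.log_le_log (by positivity) ?_
    · exact Nat.floor_le (by linarith)
  have hHle : H ≤ 3 * Real.log M := by
    have h1 : H ≤ 1 + Real.log N := by
      have := harmonic_le_one_add_log N
      have heq : ((harmonic N : ℚ) : ℝ) = H := by
        rw [harmonic_eq_sum_Icc]
        push_cast
        rw [← hH]
      linarith [heq ▸ this]
    linarith
  calc ∑ m₁ ∈ Finset.Icc 1 N, ∑ m₂ ∈ Finset.Icc 1 N, ∑ m₃ ∈ Finset.Icc 1 N,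
        (1 : ℝ) / (Nat.lcm (Nat.lcm m₁ m₂) m₃ : ℝ)
      ≤ H ^ 7 := key
    _ ≤ (3 * Real.log M) ^ 7 := pow_le_pow_left₀ hHnn hHle 7
    _ = 2187 * Real.log M ^ 7 := by rw [mul_pow]; norm_num
end

section
/- Let k ≥ 2 be an integer and ε' ∈ (0,1). There exist C = C(k, ε') and X_0 = X_0(k, ε') such that for all X ≥ X_0 one has ∑_{n ≤ 4X} 𝑑̃_k(n)^3 ≤ C · X (log X)^{3(1+ε')k log k + 7}. -/
open Finset

/-- `dk k n` is the `k`-fold divisor function `d_k(n)`: the number of `k`-tuples of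
positive integers with product `n` (for `n ≥ 1`); `dk 0 n = 1_{n = 1}`. -/
def dk : ℕ → ℕ → ℕ
  | 0, n => if n = 1 then 1 else 0
  | k + 1, n => ∑ d ∈ n.divisors, dk k d

/-- `bigOmega n = Ω(n)`, the number of prime factors of `n` counted with multiplicity. -/
def bigOmega (n : ℕ) : ℕ := (Nat.primeFactorsList n).length

/-- `Mval k X = M := X^(2k / log log X)`. -/
noncomputable def Mval (k : ℕ) (X : ℝ) : ℝ := X ^ ((2 * (k : ℝ)) / Real.log (Real.log X))

/-- The modified divisor function
`𝑑̃_k(n) := 1_{(X, 2X]}(n) · ∑_{m ∣ n, m ≤ M, Ω(m) ≤ (1+ε')k log log X} d_{k−1}(m)`. -/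
noncomputable def dtilde (k : ℕ) (ε' : ℝ) (X : ℝ) (n : ℕ) : ℝ :=
  (if X < (n : ℝ) ∧ (n : ℝ) ≤ 2 * X then 1 else 0) *
    ∑ m ∈ n.divisors.filter (fun m : ℕ => ((m : ℝ) ≤ Mval k X) ∧
        (bigOmega m : ℝ) ≤ (1 + ε') * k * Real.log (Real.log X)), (dk (k - 1) m : ℝ)

lemma dk_eq_zeta_pow (j n : ℕ) : dk j n = (ArithmeticFunction.zeta ^ j) n := by
  induction j generalizing n with
  | zero => simp [dk, ArithmeticFunction.one_apply]
  | succ j ih =>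
    rw [pow_succ']
    simp only [dk, ArithmeticFunction.zeta_mul_apply]
    exact Finset.sum_congr rfl fun d _ => ih d

lemma zeta_pow_isMult (j : ℕ) : (ArithmeticFunction.zeta ^ j).IsMultiplicative := by
  induction j with
  | zero => simpa using ArithmeticFunction.isMultiplicative_one
  | succ j ih => rw [pow_succ']; exact ArithmeticFunction.isMultiplicative_zeta.mul ih

lemma dk_one (j : ℕ) : dk j 1 = 1 := by
  rw [dk_eq_zeta_pow]; exact (zeta_pow_isMult j).1

lemma dk_mult (j : ℕ) {x y : ℕ} (h : Nat.Coprime x y) : dk j (x * y) = dk j x * dk j y := by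
  simp only [dk_eq_zeta_pow]; exact (zeta_pow_isMult j).2 h

lemma dk_factorization (j : ℕ) {n : ℕ} (hn : n ≠ 0) :
    dk j n = n.factorization.prod fun p a => dk j (p ^ a) :=
  Nat.multiplicative_factorization (dk j) (fun _ _ h => dk_mult j h) (dk_one j) hn

lemma dk_one_apply (m : ℕ) : dk 1 m = if m = 0 then 0 else 1 := by
  show (∑ d ∈ m.divisors, if d = 1 then 1 else 0) = _
  rw [Finset.sum_ite_eq' m.divisors 1 (fun _ => 1)]
  by_cases h : m = 0 <;> simp [h, Nat.one_mem_divisors]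

lemma dk_prime_pow (j a : ℕ) {p : ℕ} (hp : p.Prime) :
    dk (j + 1) (p ^ a) = (a + j).choose j := by
  induction j generalizing a with
  | zero => rw [dk_one_apply]; simp [pow_eq_zero_iff, hp.ne_zero]
  | succ j ih =>
    show (∑ d ∈ (p ^ a).divisors, dk (j + 1) d) = _
    rw [Nat.sum_divisors_prime_pow hp]
    have : ∀ i ∈ Finset.range (a + 1), dk (j + 1) (p ^ i) = (i + j).choose j :=
      fun i _ => ih i
    rw [Finset.sum_congr rfl this]
    have h2 : ∀ b : ℕ, ∑ i ∈ Finset.range (b + 1), (i + j).choose j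
        = (b + j + 1).choose (j + 1) := by
      intro b
      induction b with
      | zero => simp
      | succ b ihb =>
        rw [Finset.sum_range_succ, ihb]
        have : b + 1 + j + 1 = (b + j + 1) + 1 := by omega
        rw [this, Nat.choose_succ_succ (b + j + 1) j]
        have e1 : b + 1 + j = b + j + 1 := by omega
        rw [e1]
        simp only [Nat.succ_eq_add_one]
        omega
    rw [h2]
    have : a + (j + 1) = a + j + 1 := by omega
    rw [this]

-- choose bound: (a+j).choose j ≤ (j+1)^a
lemma choose_add_le_pow (j a : ℕ) : (a + j).choose j ≤ (j + 1) ^ a := by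
  induction a with
  | zero => simp
  | succ a ih =>
    have hsymm : ∀ b : ℕ, (b + j).choose j = (b + j).choose b := by
      intro b; exact Nat.choose_symm_of_eq_add (by omega)
    have key : (a + j).choose (a + 1) ≤ j * (a + j).choose a := by
      have h := Nat.choose_succ_right_eq (a + j) a
      -- (a+j).choose (a+1) * (a+1) = (a+j).choose a * (a+j-a)
      have h2 : (a + j).choose (a + 1) ≤ (a + j).choose (a + 1) * (a + 1) := by
        nlinarith [Nat.choose_pos (show a + 1 ≤ a + j + 1 by omega)]
      have h3 : a + j - a = j := by omega
      calc (a + j).choose (a + 1) ≤ (a + j).choose (a + 1) * (a + 1) := h2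
        _ = (a + j).choose a * j := by rw [h, h3]
        _ = j * (a + j).choose a := by ring
    have pas : (a + 1 + j).choose (a + 1) = (a + j).choose a + (a + j).choose (a + 1) := by
      have : a + 1 + j = (a + j) + 1 := by omega
      rw [this, Nat.choose_succ_succ]
    calc (a + 1 + j).choose j = (a + 1 + j).choose (a + 1) := hsymm (a + 1)
      _ = (a + j).choose a + (a + j).choose (a + 1) := pas
      _ ≤ (a + j).choose a + j * (a + j).choose a := by omega
      _ = (j + 1) * (a + j).choose a := by ring
      _ = (j + 1) * (a + j).choose j := by rw [hsymm a]
      _ ≤ (j + 1) * (j + 1) ^ a := Nat.mul_le_mul_left _ ih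
      _ = (j + 1) ^ (a + 1) := by ring

lemma cube_le_choose (a : ℕ) : (a + 1) ^ 3 ≤ (a + 7).choose 7 := by
  induction a with
  | zero => simp
  | succ a ih =>
    have h := Nat.choose_mul_succ_eq (a + 7) 7
    -- (a+7).choose 7 * (a+8) = (a+8).choose 7 * (a+1)
    have h2 : (a + 7).choose 7 * (a + 8) = (a + 8).choose 7 * (a + 1) := by
      have : a + 7 + 1 - 7 = a + 1 := by omega
      rw [← this]
      have e : a + 7 + 1 = a + 8 := by omega
      rw [← e, h]
    have key : (a + 2) ^ 3 * (a + 1) ≤ (a + 8).choose 7 * (a + 1) := by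
      calc (a + 2) ^ 3 * (a + 1) ≤ (a + 1) ^ 3 * (a + 8) := by zify; nlinarith [Int.natCast_nonneg a, sq_nonneg ((a:ℤ)), mul_nonneg (mul_nonneg (Int.natCast_nonneg a) (Int.natCast_nonneg a)) (Int.natCast_nonneg a)]
        _ ≤ (a + 7).choose 7 * (a + 8) := Nat.mul_le_mul_right _ ih
        _ = (a + 8).choose 7 * (a + 1) := h2
    have := Nat.le_of_mul_le_mul_right key (by omega : 0 < a + 1)
    have e : a + 1 + 1 = a + 2 := by omega
    have e2 : a + 1 + 7 = a + 8 := by omega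
    rw [e, e2]
    exact this


lemma bigOmega_zero : bigOmega 0 = 0 := by simp [bigOmega]
lemma bigOmega_one : bigOmega 1 = 0 := by simp [bigOmega]

lemma bigOmega_eq_cardFactors (n : ℕ) : bigOmega n = ArithmeticFunction.cardFactors n :=
  (ArithmeticFunction.cardFactors_apply).symm

lemma bigOmega_mul {x y : ℕ} (hx : x ≠ 0) (hy : y ≠ 0) :
    bigOmega (x * y) = bigOmega x + bigOmega y := by
  simp only [bigOmega_eq_cardFactors]
  exact ArithmeticFunction.cardFactors_mul hx hy

lemma bigOmega_prime_pow {p : ℕ} (hp : p.Prime) (a : ℕ) : bigOmega (p ^ a) = a := by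
  rw [bigOmega_eq_cardFactors]
  exact ArithmeticFunction.cardFactors_apply_prime_pow hp

lemma pow_bigOmega_factorization (c : ℕ) {n : ℕ} (hn : n ≠ 0) :
    c ^ bigOmega n = n.factorization.prod fun p a => c ^ a := by
  have hmult : ∀ x y : ℕ, Nat.Coprime x y →
      c ^ bigOmega (x * y) = c ^ bigOmega x * c ^ bigOmega y := by
    intro x y hxy
    rcases eq_or_ne x 0 with rfl | hx
    · have h1 : y = 1 := (Nat.coprime_zero_left y).mp hxy
      subst h1; simp [bigOmega_zero, bigOmega_one]
    rcases eq_or_ne y 0 with rfl | hy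
    · have h1 : x = 1 := (Nat.coprime_zero_right x).mp hxy
      subst h1; simp [bigOmega_zero, bigOmega_one]
    · rw [bigOmega_mul hx hy, pow_add]
  have h := Nat.multiplicative_factorization (fun n => c ^ bigOmega n) hmult
    (by simp [bigOmega_one]) hn
  refine h.trans (Finsupp.prod_congr fun p hp => ?_)
  have hpp : p.Prime := Nat.prime_of_mem_primeFactors (by rwa [Nat.support_factorization] at hp)
  simp [bigOmega_prime_pow hpp]

lemma dk_le_pow_bigOmega (j : ℕ) {m : ℕ} (hm : m ≠ 0) :
    dk (j + 1) m ≤ (j + 1) ^ bigOmega m := by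
  rw [dk_factorization (j + 1) hm, pow_bigOmega_factorization (j + 1) hm]
  rw [Finsupp.prod, Finsupp.prod]
  refine Finset.prod_le_prod (fun _ _ => Nat.zero_le _) fun p hp => ?_
  have hpp : p.Prime := Nat.prime_of_mem_primeFactors (by rwa [Nat.support_factorization] at hp)
  rw [dk_prime_pow j _ hpp]
  exact choose_add_le_pow j _

lemma dk_two_eq_card (n : ℕ) : dk 2 n = n.divisors.card := by
  show (∑ d ∈ n.divisors, dk 1 d) = _
  rw [Finset.sum_congr rfl fun d hd => ?_, Finset.sum_const, smul_eq_mul, mul_one]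
  rw [dk_one_apply]
  simp [(Nat.pos_of_mem_divisors hd).ne']

lemma tau_cube_le_dk8 {n : ℕ} (hn : n ≠ 0) : dk 2 n ^ 3 ≤ dk 8 n := by
  rw [dk_factorization 2 hn, dk_factorization 8 hn, Finsupp.prod, Finsupp.prod,
    ← Finset.prod_pow]
  refine Finset.prod_le_prod (fun _ _ => Nat.zero_le _) fun p hp => ?_
  have hpp : p.Prime := Nat.prime_of_mem_primeFactors (by rwa [Nat.support_factorization] at hp)
  have e2 : dk 2 (p ^ n.factorization p) = n.factorization p + 1 := by
    have := dk_prime_pow 1 (n.factorization p) hpp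
    simpa [Nat.choose_one_right] using this
  have e8 : dk 8 (p ^ n.factorization p) = (n.factorization p + 7).choose 7 := by
    exact dk_prime_pow 7 (n.factorization p) hpp
  rw [e2, e8]
  exact cube_le_choose _


lemma harmonic_le (N : ℕ) : ∑ a ∈ Finset.Icc 1 N, (1 / (a : ℝ)) ≤ 1 + Real.log N := by
  induction N with
  | zero => simp
  | succ N ih =>
    rcases Nat.eq_zero_or_pos N with rfl | hN
    · simp
    have hstep : Real.log N + 1 / (N + 1 : ℝ) ≤ Real.log (N + 1 : ℕ) := by
      have hN' : (0 : ℝ) < N := by exact_mod_cast hN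
      have hx : (0 : ℝ) < (N : ℝ) / (N + 1) := by positivity
      have h := Real.log_le_sub_one_of_pos hx
      rw [Real.log_div (by positivity) (by positivity)] at h
      push_cast
      have : (N : ℝ) / (N + 1) - 1 = -(1 / (N + 1)) := by field_simp; ring
      rw [this] at h
      linarith
    rw [Finset.sum_Icc_succ_top (by omega)]
    push_cast
    push_cast at hstep ih
    linarith

lemma swap_divisors (N : ℕ) (f : ℕ → ℝ) :
    ∑ n ∈ Finset.Icc 1 N, ∑ d ∈ n.divisors, f d
      = ∑ a ∈ Finset.Icc 1 N, ∑ b ∈ Finset.Icc 1 (N / a), f b := by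
  rw [Finset.sum_sigma' (Finset.Icc 1 N) (fun n => n.divisors) (fun _ b => f b)]
  rw [Finset.sum_sigma' (Finset.Icc 1 N) (fun a => Finset.Icc 1 (N / a)) (fun _ b => f b)]
  refine Finset.sum_nbij' (fun x => ⟨x.1 / x.2, x.2⟩) (fun x => ⟨x.1 * x.2, x.2⟩) ?_ ?_ ?_ ?_ ?_
  · rintro ⟨n, d⟩ hx
    simp only [Finset.mem_sigma, Finset.mem_Icc, Nat.mem_divisors] at hx ⊢
    obtain ⟨⟨h1, h2⟩, hd, hn0⟩ := hx
    have hd0 : 0 < d := Nat.pos_of_dvd_of_pos hd (by omega)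
    have hq : 0 < n / d := Nat.div_pos (Nat.le_of_dvd (by omega) hd) hd0
    refine ⟨⟨hq, le_trans (Nat.div_le_self n d) h2⟩, hd0, ?_⟩
    rw [Nat.le_div_iff_mul_le hq, Nat.mul_div_cancel' hd]
    exact h2
  · rintro ⟨a, b⟩ hx
    simp only [Finset.mem_sigma, Finset.mem_Icc, Nat.mem_divisors] at hx ⊢
    obtain ⟨⟨h1, h2⟩, hb1, hb2⟩ := hx
    have hab : a * b ≤ N := by
      rw [Nat.le_div_iff_mul_le (by omega)] at hb2
      calc a * b = b * a := mul_comm _ _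
        _ ≤ N := hb2
    exact ⟨⟨Nat.mul_pos (by omega) (by omega), hab⟩, dvd_mul_left b a,
      (Nat.mul_pos (by omega : 0 < a) (by omega : 0 < b)).ne'⟩
  · rintro ⟨n, d⟩ hx
    simp only [Finset.mem_sigma, Finset.mem_Icc, Nat.mem_divisors] at hx
    obtain ⟨⟨h1, h2⟩, hd, hn0⟩ := hx
    simp only [Sigma.mk.inj_iff, heq_eq_eq, and_true]
    exact Nat.div_mul_cancel hd
  · rintro ⟨a, b⟩ hx
    simp only [Finset.mem_sigma, Finset.mem_Icc] at hx
    simp only [Sigma.mk.inj_iff, heq_eq_eq, and_true]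
    rw [mul_comm]
    exact Nat.mul_div_cancel_left a (by omega)
  · rintro ⟨n, d⟩ _
    rfl


lemma one_add_log_nonneg {N : ℕ} : (0:ℝ) ≤ 1 + Real.log N := by
  rcases Nat.eq_zero_or_pos N with rfl | hN
  · simp
  · have : (0:ℝ) ≤ Real.log N := Real.log_natCast_nonneg N
    linarith

lemma dk_sum (j N : ℕ) :
    ∑ n ∈ Finset.Icc 1 N, (dk (j + 1) n : ℝ) ≤ N * (1 + Real.log N) ^ j := by
  induction j generalizing N with
  | zero =>
    have : ∀ n ∈ Finset.Icc 1 N, (dk 1 n : ℝ) = 1 := by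
      intro n hn
      simp only [Finset.mem_Icc] at hn
      rw [dk_one_apply]
      simp [show n ≠ 0 by omega]
    rw [Finset.sum_congr rfl this, Finset.sum_const, Nat.card_Icc]
    simp
  | succ j ih =>
    have expand : ∀ n : ℕ, (dk (j + 2) n : ℝ) = ∑ d ∈ n.divisors, (dk (j + 1) d : ℝ) := by
      intro n
      show ((∑ d ∈ n.divisors, dk (j+1) d : ℕ) : ℝ) = _
      push_cast
      rfl
    rcases Nat.eq_zero_or_pos N with rfl | hN
    · simp
    have hlogN : (0:ℝ) ≤ Real.log N := Real.log_natCast_nonneg N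
    calc ∑ n ∈ Finset.Icc 1 N, (dk (j + 2) n : ℝ)
        = ∑ a ∈ Finset.Icc 1 N, ∑ b ∈ Finset.Icc 1 (N / a), (dk (j + 1) b : ℝ) := by
          rw [Finset.sum_congr rfl fun n _ => expand n, swap_divisors]
      _ ≤ ∑ a ∈ Finset.Icc 1 N, ((N : ℝ) / a) * (1 + Real.log N) ^ j := by
          refine Finset.sum_le_sum fun a ha => ?_
          simp only [Finset.mem_Icc] at ha
          have h1 := ih (N / a)
          have hcast : ((N / a : ℕ) : ℝ) ≤ (N : ℝ) / a := Nat.cast_div_le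
          have hlog : Real.log (N / a : ℕ) ≤ Real.log N := by
            rcases Nat.eq_zero_or_pos (N / a) with h0 | hpos
            · rw [h0]; simpa using hlogN
            · exact Real.log_le_log (by exact_mod_cast hpos)
                (by exact_mod_cast Nat.div_le_self N a)
          have hpow : ((1 : ℝ) + Real.log (N / a : ℕ)) ^ j ≤ (1 + Real.log N) ^ j := by
            apply pow_le_pow_left₀ one_add_log_nonneg
            linarith
          calc ∑ b ∈ Finset.Icc 1 (N / a), (dk (j + 1) b : ℝ)
              ≤ ((N / a : ℕ) : ℝ) * (1 + Real.log (N / a : ℕ)) ^ j := h1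
            _ ≤ ((N : ℝ) / a) * (1 + Real.log N) ^ j := by
                apply mul_le_mul hcast hpow (by positivity) (by positivity)
      _ = (N : ℝ) * (1 + Real.log N) ^ j * ∑ a ∈ Finset.Icc 1 N, (1 / (a:ℝ)) := by
          rw [Finset.mul_sum]
          refine Finset.sum_congr rfl fun a _ => ?_
          ring
      _ ≤ (N : ℝ) * (1 + Real.log N) ^ j * (1 + Real.log N) := by
          apply mul_le_mul_of_nonneg_left (harmonic_le N) (by positivity)
      _ = N * (1 + Real.log N) ^ (j + 1) := by ring


/-- For `k ≥ 2`, `ε' ∈ (0,1)` there are `C, X₀` such that for all `X ≥ X₀`,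
`∑_{n ≤ 4X} 𝑑̃_k(n)^3 ≤ C · X (log X)^{3(1+ε')k log k + 7}`. -/
theorem statement2 (k : ℕ) (hk : 2 ≤ k) (ε' : ℝ) (hε : ε' ∈ Set.Ioo (0 : ℝ) 1) :
    ∃ C : ℝ, 0 < C ∧ ∃ X₀ : ℝ, ∀ X : ℝ, X₀ ≤ X →
      ∑ n ∈ Finset.Icc 1 ⌊4 * X⌋₊, dtilde k ε' X n ^ 3 ≤
        C * X * Real.log X ^ (3 * (1 + ε') * k * Real.log k + 7) := by
  obtain ⟨hε0, hε1⟩ := hε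
  refine ⟨8748, by norm_num, 16 + Real.exp (Real.exp 1), fun X hX => ?_⟩
  have hexp_pos : (0:ℝ) < Real.exp (Real.exp 1) := Real.exp_pos _
  have hX16 : (16:ℝ) ≤ X := by linarith
  have hXpos : (0:ℝ) < X := by linarith
  have hXe : Real.exp (Real.exp 1) ≤ X := by linarith
  have hlogX : Real.exp 1 ≤ Real.log X := (Real.le_log_iff_exp_le hXpos).mpr hXe
  have h1e : (1:ℝ) ≤ Real.exp 1 := Real.one_le_exp (by norm_num)
  have hlogX1 : (1:ℝ) ≤ Real.log X := le_trans h1e hlogX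
  have hlogpos : (0:ℝ) < Real.log X := by linarith
  have hloglog1 : (1:ℝ) ≤ Real.log (Real.log X) :=
    (Real.le_log_iff_exp_le hlogpos).mpr (by simpa using hlogX)
  have hloglog0 : (0:ℝ) ≤ Real.log (Real.log X) := by linarith
  set N := ⌊4 * X⌋₊ with hN
  set c := (1 + ε') * k * Real.log k with hc
  have hlogk0 : (0:ℝ) ≤ Real.log k := by
    apply Real.log_nonneg
    exact_mod_cast Nat.one_le_of_lt hk
  have hc0 : 0 ≤ c := by positivity
  set B := Real.exp (c * Real.log (Real.log X)) with hB
  have hB0 : (0:ℝ) ≤ B := (Real.exp_pos _).le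
  -- pointwise bound
  have hpoint : ∀ n : ℕ, dtilde k ε' X n ≤ (dk 2 n : ℝ) * B := by
    intro n
    rw [dtilde]
    set s := n.divisors.filter (fun m : ℕ => ((m : ℝ) ≤ Mval k X) ∧
        (bigOmega m : ℝ) ≤ (1 + ε') * k * Real.log (Real.log X)) with hs
    have hterm : ∀ m ∈ s, (dk (k - 1) m : ℝ) ≤ B := by
      intro m hm
      rw [hs, Finset.mem_filter] at hm
      obtain ⟨hmd, _, hΩ⟩ := hm
      have hm0 : m ≠ 0 := (Nat.pos_of_mem_divisors hmd).ne'
      obtain ⟨j, hj⟩ : ∃ j, k - 1 = j + 1 := ⟨k - 2, by omega⟩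
      have h1 : (dk (k - 1) m : ℝ) ≤ ((j + 1 : ℕ) : ℝ) ^ (bigOmega m) := by
        rw [hj]
        exact_mod_cast dk_le_pow_bigOmega j hm0
      set b := ((j + 1 : ℕ) : ℝ) with hbdef
      have hb1 : (1:ℝ) ≤ b := by rw [hbdef]; exact_mod_cast Nat.succ_le_succ (Nat.zero_le j)
      have hbk : b ≤ (k : ℝ) := by
        have : j + 1 ≤ k := by omega
        rw [hbdef]
        exact_mod_cast this
      have h2 : b ^ (bigOmega m) = b ^ ((bigOmega m : ℕ) : ℝ) :=
        (Real.rpow_natCast b (bigOmega m)).symm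
      have h3 : b ^ ((bigOmega m : ℕ) : ℝ)
          ≤ b ^ ((1 + ε') * k * Real.log (Real.log X)) :=
        Real.rpow_le_rpow_of_exponent_le hb1 hΩ
      have h4 : b ^ ((1 + ε') * k * Real.log (Real.log X))
          ≤ (k : ℝ) ^ ((1 + ε') * k * Real.log (Real.log X)) :=
        Real.rpow_le_rpow (by linarith) hbk (by positivity)
      have h5 : (k : ℝ) ^ ((1 + ε') * k * Real.log (Real.log X)) = B := by
        rw [Real.rpow_def_of_pos (by exact_mod_cast (by omega : 0 < k)), hB, hc]
        congr 1
        ring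
      calc (dk (k - 1) m : ℝ) ≤ b ^ (bigOmega m) := h1
        _ = b ^ ((bigOmega m : ℕ) : ℝ) := h2
        _ ≤ b ^ ((1 + ε') * k * Real.log (Real.log X)) := h3
        _ ≤ (k : ℝ) ^ ((1 + ε') * k * Real.log (Real.log X)) := h4
        _ = B := h5
    have hsum : ∑ m ∈ s, (dk (k - 1) m : ℝ) ≤ (s.card : ℝ) * B := by
      have := Finset.sum_le_card_nsmul s _ B hterm
      simpa [nsmul_eq_mul] using this
    have hcard : (s.card : ℝ) ≤ (dk 2 n : ℝ) := by
      rw [dk_two_eq_card]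
      exact_mod_cast Finset.card_filter_le _ _
    have hS0 : (0:ℝ) ≤ ∑ m ∈ s, (dk (k - 1) m : ℝ) :=
      Finset.sum_nonneg fun m _ => by positivity
    have hind : (if X < (n : ℝ) ∧ (n : ℝ) ≤ 2 * X then (1:ℝ) else 0) ≤ 1 := by
      split_ifs <;> norm_num
    have hind0 : (0:ℝ) ≤ (if X < (n : ℝ) ∧ (n : ℝ) ≤ 2 * X then (1:ℝ) else 0) := by
      split_ifs <;> norm_num
    calc (if X < (n : ℝ) ∧ (n : ℝ) ≤ 2 * X then (1:ℝ) else 0) * ∑ m ∈ s, (dk (k - 1) m : ℝ)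
        ≤ 1 * ∑ m ∈ s, (dk (k - 1) m : ℝ) := mul_le_mul_of_nonneg_right hind hS0
      _ = ∑ m ∈ s, (dk (k - 1) m : ℝ) := one_mul _
      _ ≤ (s.card : ℝ) * B := hsum
      _ ≤ (dk 2 n : ℝ) * B := mul_le_mul_of_nonneg_right hcard hB0
  have hd0 : ∀ n : ℕ, 0 ≤ dtilde k ε' X n := by
    intro n
    rw [dtilde]
    apply mul_nonneg
    · split_ifs <;> norm_num
    · exact Finset.sum_nonneg fun m _ => by positivity
  -- sum bound
  have hNle : (N : ℝ) ≤ 4 * X := Nat.floor_le (by positivity)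
  have hlogN : Real.log N ≤ 2 * Real.log X := by
    rcases Nat.eq_zero_or_pos N with h0 | hNpos
    · rw [h0]; simp; linarith
    · have h1 : Real.log N ≤ Real.log (4 * X) :=
        Real.log_le_log (by exact_mod_cast hNpos) hNle
      have h2 : Real.log (4 * X) = Real.log 4 + Real.log X :=
        Real.log_mul (by norm_num) (by linarith)
      have h3 : Real.log 4 ≤ Real.log X := Real.log_le_log (by norm_num) (by linarith)
      linarith
  have hpow7 : (1 + Real.log N) ^ 7 ≤ 2187 * Real.log X ^ 7 := by
    have h1 : (0:ℝ) ≤ 1 + Real.log N := by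
      rcases Nat.eq_zero_or_pos N with h0 | hNpos
      · rw [h0]; simp
      · have := Real.log_natCast_nonneg N; linarith
    have h2 : 1 + Real.log N ≤ 3 * Real.log X := by linarith
    calc (1 + Real.log N) ^ 7 ≤ (3 * Real.log X) ^ 7 := pow_le_pow_left₀ h1 h2 7
      _ = 2187 * Real.log X ^ 7 := by ring
  calc ∑ n ∈ Finset.Icc 1 N, dtilde k ε' X n ^ 3
      ≤ ∑ n ∈ Finset.Icc 1 N, ((dk 2 n : ℝ) * B) ^ 3 := by
        refine Finset.sum_le_sum fun n _ => ?_
        exact pow_le_pow_left₀ (hd0 n) (hpoint n) 3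
    _ = B ^ 3 * ∑ n ∈ Finset.Icc 1 N, ((dk 2 n : ℝ)) ^ 3 := by
        rw [Finset.mul_sum]
        exact Finset.sum_congr rfl fun n _ => by ring
    _ ≤ B ^ 3 * ∑ n ∈ Finset.Icc 1 N, (dk 8 n : ℝ) := by
        refine mul_le_mul_of_nonneg_left (Finset.sum_le_sum fun n hn => ?_) (by positivity)
        have hn1 : n ≠ 0 := by
          simp only [Finset.mem_Icc] at hn; omega
        have := tau_cube_le_dk8 hn1
        exact_mod_cast this
    _ ≤ B ^ 3 * ((N : ℝ) * (1 + Real.log N) ^ 7) := by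
        refine mul_le_mul_of_nonneg_left ?_ (by positivity)
        exact dk_sum 7 N
    _ ≤ B ^ 3 * ((4 * X) * (2187 * Real.log X ^ 7)) := by
        refine mul_le_mul_of_nonneg_left ?_ (by positivity)
        apply mul_le_mul hNle hpow7 (by positivity) (by positivity)
    _ = 8748 * X * (Real.log X ^ 7 * B ^ 3) := by ring
    _ = 8748 * X * Real.log X ^ (3 * (1 + ε') * k * Real.log k + 7) := by
        congr 1
        have e1 : Real.log X ^ (7:ℕ) = Real.exp (7 * Real.log (Real.log X)) := by
          rw [← Real.exp_log hlogpos]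
          rw [← Real.exp_nat_mul]
          norm_num
        have e2 : B ^ (3:ℕ) = Real.exp (3 * (c * Real.log (Real.log X))) := by
          rw [hB, ← Real.exp_nat_mul]
          norm_num
        rw [e1, e2, ← Real.exp_add,
          Real.rpow_def_of_pos hlogpos]
        congr 1
        rw [hc]
        ring
end

section
/- There is an absolute constant C > 0 such that for every integer N ≥ 1 and every real Q ≥ N^{10}, one has (1/Q) ∑_{n ∈ ℤ, |n| ≤ Q} ( #{ q : 1 ≤ q ≤ N, q ∣ n } )^{10} ≤ C N^{3/4}. -/
open Finset

noncomputable def stA : ℝ := 2 / (2 ^ ((200:ℝ)⁻¹) - 1)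

lemma st_t_gt_one : 1 < (2:ℝ) ^ ((200:ℝ)⁻¹) := by
  rw [Real.one_lt_rpow_iff_of_pos two_pos]
  norm_num

lemma st_t_le_two : (2:ℝ) ^ ((200:ℝ)⁻¹) ≤ 2 := by
  calc (2:ℝ) ^ ((200:ℝ)⁻¹) ≤ 2 ^ (1:ℝ) :=
        Real.rpow_le_rpow_of_exponent_le one_le_two (by norm_num)
    _ = 2 := Real.rpow_one 2

lemma stA_ge_two : 2 ≤ stA := by
  have h := st_t_gt_one
  rw [stA, le_div_iff₀ (by linarith)]
  nlinarith [st_t_le_two]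

lemma stA_pos : 0 < stA := by linarith [stA_ge_two]

lemma st_factor (p e : ℕ) (hp : 2 ≤ p) (he : 1 ≤ e) :
    ((e:ℝ) + 1) ≤ (if p < 2^200 then stA else 1) * ((p:ℝ) ^ e) ^ ((200:ℝ)⁻¹) := by
  have hp0 : (2:ℝ) ≤ (p:ℝ) := by exact_mod_cast hp
  have h2p : ((2:ℝ) ^ e) ^ ((200:ℝ)⁻¹) ≤ ((p:ℝ) ^ e) ^ ((200:ℝ)⁻¹) :=
    Real.rpow_le_rpow (by positivity) (pow_le_pow_left₀ (by norm_num) hp0 e) (by norm_num)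
  have he1 : (1:ℝ) ≤ (e:ℝ) := by exact_mod_cast he
  by_cases hsmall : p < 2^200
  · rw [if_pos hsmall]
    set t : ℝ := (2:ℝ) ^ ((200:ℝ)⁻¹) with ht
    have htone := st_t_gt_one
    have hte : ((2:ℝ) ^ e) ^ ((200:ℝ)⁻¹) = t ^ e := by
      rw [← Real.rpow_natCast (2:ℝ) e, ← Real.rpow_natCast t e, ht,
        ← Real.rpow_mul (by norm_num), ← Real.rpow_mul (by norm_num), mul_comm]
    have hbern : 1 + (e:ℝ) * (t - 1) ≤ t ^ e := by
      have := one_add_mul_le_pow (a := t - 1) (by linarith) e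
      simpa using this
    have hAt : stA * (t - 1) = 2 := by
      have hne : (2:ℝ) ^ ((200:ℝ)⁻¹) - 1 ≠ 0 := by linarith
      rw [stA, ht]; exact div_mul_cancel₀ _ hne
    have hA0 : (0:ℝ) ≤ stA := le_of_lt stA_pos
    have hXge : t ^ e ≤ ((p:ℝ) ^ e) ^ ((200:ℝ)⁻¹) := by rw [← hte]; exact h2p
    calc (e:ℝ) + 1 ≤ 2 * (e:ℝ) := by linarith
      _ = stA * ((t - 1) * e) := by rw [← mul_assoc, hAt]
      _ ≤ stA * (1 + (e:ℝ) * (t - 1)) := by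
          apply mul_le_mul_of_nonneg_left (by linarith) hA0
      _ ≤ stA * (t ^ e) := mul_le_mul_of_nonneg_left hbern hA0
      _ ≤ stA * (((p:ℝ) ^ e) ^ ((200:ℝ)⁻¹)) := mul_le_mul_of_nonneg_left hXge hA0
  · rw [if_neg hsmall, one_mul]
    have hplarge : (2:ℕ)^200 ≤ p := le_of_not_gt hsmall
    have h1 : ((2:ℝ)^(200*e)) ^ ((200:ℝ)⁻¹) = (2:ℝ) ^ e := by
      rw [← Real.rpow_natCast (2:ℝ) (200*e), ← Real.rpow_mul (by norm_num),
        ← Real.rpow_natCast (2:ℝ) e]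
      congr 1
      push_cast
      ring
    have h2 : ((2:ℝ)^(200*e)) ^ ((200:ℝ)⁻¹) ≤ ((p:ℝ) ^ e) ^ ((200:ℝ)⁻¹) := by
      apply Real.rpow_le_rpow (by positivity) _ (by norm_num)
      rw [pow_mul]
      apply pow_le_pow_left₀ (by positivity)
      exact_mod_cast hplarge
    have h3 : (e:ℝ) + 1 ≤ (2:ℝ) ^ e := by
      have := Nat.lt_two_pow_self (n := e)
      exact_mod_cast this
    rw [← h1] at h3
    linarith

lemma st_card_divisors_le (L : ℕ) (hL : L ≠ 0) :
    (L.divisors.card : ℝ) ≤ stA ^ (2^200 : ℕ) * (L:ℝ) ^ ((200:ℝ)⁻¹) := by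
  have h0 : (L.divisors.card : ℝ) = ∏ p ∈ L.primeFactors, ((L.factorization p + 1 : ℕ) : ℝ) := by
    rw [Nat.card_divisors hL]
    push_cast
    rfl
  have h1 : ∀ p ∈ L.primeFactors, ((L.factorization p + 1 : ℕ):ℝ) ≤
      (if p < 2^200 then stA else 1) * ((p:ℝ) ^ (L.factorization p)) ^ ((200:ℝ)⁻¹) := by
    intro p hp
    have hpp := Nat.prime_of_mem_primeFactors hp
    have he : 1 ≤ L.factorization p :=
      (Nat.Prime.factorization_pos_of_dvd hpp hL (Nat.dvd_of_mem_primeFactors hp))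
    push_cast
    exact st_factor p _ hpp.two_le he
  have hprod : ∏ p ∈ L.primeFactors, ((p:ℝ) ^ (L.factorization p)) ^ ((200:ℝ)⁻¹)
      = (L:ℝ) ^ ((200:ℝ)⁻¹) := by
    rw [Real.finset_prod_rpow _ _ (fun p _ => by positivity) _]
    congr 1
    have hnat : ∏ p ∈ L.primeFactors, p ^ L.factorization p = L := by
      conv_rhs => rw [← Nat.factorization_prod_pow_eq_self hL]
      rfl
    exact_mod_cast congrArg (Nat.cast : ℕ → ℝ) hnat
  have hw : ∏ p ∈ L.primeFactors, (if p < 2^200 then stA else 1) ≤ stA ^ (2^200 : ℕ) := by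
    rw [Finset.prod_ite, Finset.prod_const, Finset.prod_const, one_pow, mul_one]
    apply pow_le_pow_right₀ (by linarith [stA_ge_two])
    calc (L.primeFactors.filter (fun p => p < 2^200)).card
        ≤ (Finset.range (2^200)).card := by
          apply Finset.card_le_card
          intro p hp
          simp only [Finset.mem_filter] at hp
          exact Finset.mem_range.mpr hp.2
      _ = 2^200 := Finset.card_range _
  calc (L.divisors.card : ℝ)
      ≤ ∏ p ∈ L.primeFactors,
          ((if p < 2^200 then stA else 1) * ((p:ℝ) ^ (L.factorization p)) ^ ((200:ℝ)⁻¹)) := by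
        rw [h0]; exact Finset.prod_le_prod (fun p _ => by positivity) h1
    _ = (∏ p ∈ L.primeFactors, (if p < 2^200 then stA else 1)) *
          ∏ p ∈ L.primeFactors, ((p:ℝ) ^ (L.factorization p)) ^ ((200:ℝ)⁻¹) :=
        Finset.prod_mul_distrib
    _ ≤ stA ^ (2^200 : ℕ) * (L:ℝ) ^ ((200:ℝ)⁻¹) := by
        rw [hprod]
        exact mul_le_mul_of_nonneg_right hw (Real.rpow_nonneg (by positivity) _)

lemma st_mult_count (M L : ℕ) (hL : 0 < L) :
    (((Finset.Icc (-(M:ℤ)) (M:ℤ)).filter (fun n => (L:ℤ) ∣ n)).card : ℝ)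
      ≤ 2 * (M:ℝ) / (L:ℝ) + 1 := by
  have hLZ : (0:ℤ) < (L:ℤ) := by exact_mod_cast hL
  set K : ℤ := (M:ℤ) / L with hK
  have hK0 : 0 ≤ K := Int.ediv_nonneg (by positivity) (le_of_lt hLZ)
  have hsub : (Finset.Icc (-(M:ℤ)) (M:ℤ)).filter (fun n => (L:ℤ) ∣ n) ⊆
      (Finset.Icc (-K) K).image (fun k => k * L) := by
    intro n hn
    simp only [Finset.mem_filter, Finset.mem_Icc] at hn
    obtain ⟨⟨h1, h2⟩, hdvd⟩ := hn
    refine Finset.mem_image.mpr ⟨n / L, Finset.mem_Icc.mpr ⟨?_, ?_⟩, Int.ediv_mul_cancel hdvd⟩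
    · have h3 : (-n) / (L:ℤ) ≤ K := Int.ediv_le_ediv hLZ (by linarith)
      rw [Int.neg_ediv_of_dvd hdvd] at h3
      linarith
    · exact Int.ediv_le_ediv hLZ h2
  have hcard : ((Finset.Icc (-(M:ℤ)) (M:ℤ)).filter (fun n => (L:ℤ) ∣ n)).card
      ≤ (2*K+1).toNat := by
    refine le_trans (Finset.card_le_card hsub) (le_trans Finset.card_image_le ?_)
    rw [Int.card_Icc]
    apply le_of_eq
    congr 1
    ring
  have hKr : (K : ℝ) ≤ (M:ℝ) / (L:ℝ) := by
    rw [le_div_iff₀ (by exact_mod_cast hL)]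
    have hKL : K * (L:ℤ) ≤ (M:ℤ) := Int.ediv_mul_le _ (ne_of_gt hLZ)
    exact_mod_cast hKL
  have htn : (((2*K+1).toNat : ℤ) : ℝ) = 2*(K:ℝ)+1 := by
    rw [Int.toNat_of_nonneg (by linarith)]
    push_cast
    ring
  calc (((Finset.Icc (-(M:ℤ)) (M:ℤ)).filter (fun n => (L:ℤ) ∣ n)).card : ℝ)
      ≤ (((2*K+1).toNat : ℕ) : ℝ) := by exact_mod_cast hcard
    _ = 2*(K:ℝ)+1 := by exact_mod_cast htn
    _ ≤ 2 * (M:ℝ) / (L:ℝ) + 1 := by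
        rw [mul_div_assoc]
        linarith

lemma st_bern (u : ℝ) (h0 : 0 ≤ u) (h1 : u ≤ 1) :
    (1 - u) ^ ((20:ℝ)⁻¹) ≤ 1 - u/20 := by
  have hb : (1 - u) ≤ (1 - u/20)^(20:ℕ) := by
    calc (1:ℝ) - u = 1 + (20:ℕ) * (-(u/20)) := by push_cast; ring
      _ ≤ (1 + (-(u/20)))^(20:ℕ) := one_add_mul_le_pow (by linarith) 20
      _ = (1 - u/20)^(20:ℕ) := by ring_nf
  calc (1 - u) ^ ((20:ℝ)⁻¹) ≤ ((1 - u/20)^(20:ℕ)) ^ ((20:ℝ)⁻¹) :=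
        Real.rpow_le_rpow (by linarith) hb (by norm_num)
    _ = 1 - u/20 := by
        rw [show ((20:ℝ))⁻¹ = (((20:ℕ)):ℝ)⁻¹ by norm_num,
          Real.pow_rpow_inv_natCast (by linarith) (by norm_num)]

lemma st_sum_rpow (X : ℕ) :
    ∑ L ∈ Finset.Icc 1 X, (L:ℝ) ^ (-(19/20) : ℝ) ≤ 20 * (X:ℝ) ^ ((20:ℝ)⁻¹) := by
  induction X with
  | zero => simp
  | succ X ih =>
    rw [Finset.sum_Icc_succ_top (Nat.le_add_left 1 X)]
    set y : ℝ := (X:ℝ) + 1 with hy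
    have hy1 : (1:ℝ) ≤ y := by rw [hy]; linarith [Nat.cast_nonneg (α := ℝ) X]
    have hy0 : (0:ℝ) < y := by linarith
    have hcast : ((X + 1 : ℕ) : ℝ) = y := by push_cast; rfl
    set u : ℝ := 1/y with hu
    have hu0 : 0 ≤ u := by positivity
    have hu1 : u ≤ 1 := by rw [hu]; rw [div_le_one hy0]; linarith
    have hXy : (X:ℝ) = y * (1 - u) := by
      rw [hu]; field_simp; rw [hy]; ring
    have hkey : (X:ℝ) ^ ((20:ℝ)⁻¹) ≤ y ^ ((20:ℝ)⁻¹) * (1 - u/20) := by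
      rw [hXy, Real.mul_rpow (le_of_lt hy0) (by linarith)]
      exact mul_le_mul_of_nonneg_left (st_bern u hu0 hu1) (Real.rpow_nonneg (le_of_lt hy0) _)
    have hneg : y ^ (-(19/20) : ℝ) = y ^ ((20:ℝ)⁻¹) / y := by
      rw [show (-(19/20) : ℝ) = (20:ℝ)⁻¹ - 1 by norm_num, Real.rpow_sub hy0, Real.rpow_one]
    have hzu : y ^ ((20:ℝ)⁻¹) * u = y ^ ((20:ℝ)⁻¹) / y := by
      rw [hu]; ring
    rw [hcast, hneg]
    nlinarith [hkey, Real.rpow_nonneg (le_of_lt hy0) ((20:ℝ)⁻¹)]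

/-- there is an absolute `C > 0` such that for every integer `N ≥ 1` and
every real `Q ≥ N^10`,
`(1/Q) ∑_{|n| ≤ Q} (#{1 ≤ q ≤ N : q ∣ n})^10 ≤ C N^{3/4}`. -/
theorem statement13 : ∃ C : ℝ, 0 < C ∧ ∀ N : ℕ, 1 ≤ N → ∀ Q : ℝ, (N : ℝ) ^ 10 ≤ Q →
    (1 / Q) * ∑ n ∈ Finset.Icc (-(⌊Q⌋₊ : ℤ)) (⌊Q⌋₊ : ℤ),
        ((((Finset.Icc 1 N).filter (fun q : ℕ => (q : ℤ) ∣ n)).card : ℝ)) ^ 10 ≤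
      C * (N : ℝ) ^ ((3 : ℝ) / 4) := by
  set C0 : ℝ := stA ^ (2^200 : ℕ) with hC0
  have hC01 : 1 ≤ C0 := one_le_pow₀ (by linarith [stA_ge_two])
  refine ⟨40 * C0 ^ 10 + 1, by positivity, ?_⟩
  intro N hN Q hQ
  have hN1 : (1:ℝ) ≤ (N:ℝ) := by exact_mod_cast hN
  have hN10 : (1:ℝ) ≤ (N:ℝ)^10 := one_le_pow₀ hN1
  have hQ1 : (1:ℝ) ≤ Q := le_trans hN10 hQ
  have hQ0 : (0:ℝ) < Q := by linarith
  set M : ℕ := ⌊Q⌋₊ with hM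
  set P : Finset (Fin 10 → ℕ) := Fintype.piFinset (fun _ : Fin 10 => Finset.Icc 1 N) with hP
  have hmemP : ∀ g ∈ P, ∀ i, 1 ≤ g i ∧ g i ≤ N := by
    intro g hg i
    have := Fintype.mem_piFinset.mp hg i
    simpa [Finset.mem_Icc] using this
  have hlcm : ∀ g ∈ P, 1 ≤ Finset.univ.lcm g ∧ Finset.univ.lcm g ≤ N ^ 10 := by
    intro g hg
    have hdvd : Finset.univ.lcm g ∣ ∏ i, g i :=
      Finset.lcm_dvd (fun i _ => Finset.dvd_prod_of_mem g (Finset.mem_univ i))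
    have hpos : 0 < ∏ i, g i := Finset.prod_pos (fun i _ => (hmemP g hg i).1)
    have hne : Finset.univ.lcm g ≠ 0 := by
      intro h
      rw [h, zero_dvd_iff] at hdvd
      omega
    refine ⟨Nat.pos_of_ne_zero hne, le_trans (Nat.le_of_dvd hpos hdvd) ?_⟩
    calc ∏ i, g i ≤ N ^ (Finset.univ : Finset (Fin 10)).card :=
          Finset.prod_le_pow_card _ _ _ (fun i _ => (hmemP g hg i).2)
      _ = N ^ 10 := by rw [Finset.card_univ, Fintype.card_fin]
  -- Step 1 : pointwise expansion
  have key1 : ∀ n : ℤ,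
      ((((Finset.Icc 1 N).filter (fun q : ℕ => (q : ℤ) ∣ n)).card : ℝ)) ^ 10
        = ∑ g ∈ P, (if ((Finset.univ.lcm g : ℕ) : ℤ) ∣ n then (1:ℝ) else 0) := by
    intro n
    have hc : ((((Finset.Icc 1 N).filter (fun q : ℕ => (q : ℤ) ∣ n)).card : ℝ))
        = ∑ q ∈ Finset.Icc 1 N, (if (q:ℤ) ∣ n then (1:ℝ) else 0) := by
      rw [Finset.sum_boole]
    have hpow : (∑ q ∈ Finset.Icc 1 N, (if (q:ℤ) ∣ n then (1:ℝ) else 0)) ^ 10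
        = ∏ _i : Fin 10, ∑ q ∈ Finset.Icc 1 N, (if (q:ℤ) ∣ n then (1:ℝ) else 0) := by
      rw [Finset.prod_const, Finset.card_univ, Fintype.card_fin]
    rw [hc, hpow, Finset.prod_univ_sum, hP]
    apply Finset.sum_congr rfl
    intro g _
    have hiff : (∀ i ∈ (Finset.univ : Finset (Fin 10)), ((g i : ℕ):ℤ) ∣ n) ↔
        (((Finset.univ.lcm g : ℕ)):ℤ) ∣ n := by
      constructor
      · intro h
        exact Int.natCast_dvd.mpr
          (Finset.lcm_dvd_iff.mpr (fun i _ => Int.natCast_dvd.mp (h i (Finset.mem_univ i))))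
      · intro h i _
        exact Int.natCast_dvd.mpr
          ((Finset.dvd_lcm (Finset.mem_univ i)).trans (Int.natCast_dvd.mp h))
    by_cases hd : ((Finset.univ.lcm g : ℕ):ℤ) ∣ n
    · rw [if_pos hd, Finset.prod_eq_one]
      intro i _
      rw [if_pos (hiff.mpr hd i (Finset.mem_univ i))]
    · rw [if_neg hd]
      have hnall : ¬ (∀ i ∈ (Finset.univ : Finset (Fin 10)), ((g i:ℕ):ℤ) ∣ n) :=
        fun h => hd (hiff.mp h)
      push_neg at hnall
      obtain ⟨i, _, hi⟩ := hnall
      exact Finset.prod_eq_zero (Finset.mem_univ i) (if_neg hi)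
  -- Step 2 : swap sums
  have key2 : ∑ n ∈ Finset.Icc (-(M:ℤ)) (M:ℤ),
        ((((Finset.Icc 1 N).filter (fun q : ℕ => (q : ℤ) ∣ n)).card : ℝ)) ^ 10
      = ∑ g ∈ P, (((Finset.Icc (-(M:ℤ)) (M:ℤ)).filter
          (fun n => ((Finset.univ.lcm g : ℕ):ℤ) ∣ n)).card : ℝ) := by
    simp_rw [key1]
    rw [Finset.sum_comm]
    exact Finset.sum_congr rfl (fun g _ => by rw [Finset.sum_boole])
  set T : ℝ := ∑ g ∈ P, ((Finset.univ.lcm g : ℕ):ℝ)⁻¹ with hT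
  have hT0 : 0 ≤ T := Finset.sum_nonneg (fun g _ => by positivity)
  -- Step 3-4 : Sum ≤ 2 Q T + N^10
  have step4 : ∑ n ∈ Finset.Icc (-(M:ℤ)) (M:ℤ),
        ((((Finset.Icc 1 N).filter (fun q : ℕ => (q : ℤ) ∣ n)).card : ℝ)) ^ 10
      ≤ 2*Q*T + (N:ℝ)^10 := by
    rw [key2]
    have hMQ : (M:ℝ) ≤ Q := Nat.floor_le (le_of_lt hQ0)
    have hcardP : (P.card : ℝ) = (N:ℝ)^10 := by
      rw [hP, Fintype.card_piFinset]
      push_cast [Nat.card_Icc]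
      simp
    calc ∑ g ∈ P, (((Finset.Icc (-(M:ℤ)) (M:ℤ)).filter
            (fun n => ((Finset.univ.lcm g : ℕ):ℤ) ∣ n)).card : ℝ)
        ≤ ∑ g ∈ P, (2*Q*((Finset.univ.lcm g : ℕ):ℝ)⁻¹ + 1) := by
          apply Finset.sum_le_sum
          intro g hg
          have h1 := (hlcm g hg).1
          have hLpos : (0:ℝ) < ((Finset.univ.lcm g : ℕ):ℝ) := by exact_mod_cast h1
          calc (((Finset.Icc (-(M:ℤ)) (M:ℤ)).filter
                (fun n => ((Finset.univ.lcm g : ℕ):ℤ) ∣ n)).card : ℝ)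
              ≤ 2 * (M:ℝ) / ((Finset.univ.lcm g : ℕ):ℝ) + 1 :=
                st_mult_count M (Finset.univ.lcm g) h1
            _ ≤ 2*Q*((Finset.univ.lcm g : ℕ):ℝ)⁻¹ + 1 := by
                rw [div_eq_mul_inv]
                have : 2*(M:ℝ) ≤ 2*Q := by linarith
                have hinv : (0:ℝ) ≤ ((Finset.univ.lcm g : ℕ):ℝ)⁻¹ := by positivity
                nlinarith
      _ = 2*Q*T + (N:ℝ)^10 := by
          rw [Finset.sum_add_distrib, Finset.sum_const, ← Finset.mul_sum, hT]
          rw [nsmul_eq_mul, mul_one, hcardP]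
  -- Step 5 : T ≤ 20 C0^10 N^{1/2}
  have step5 : T ≤ 20 * C0^10 * (N:ℝ) ^ ((1:ℝ)/2) := by
    have hmaps : ∀ g ∈ P, Finset.univ.lcm g ∈ Finset.Icc 1 (N^10) := fun g hg =>
      Finset.mem_Icc.mpr (hlcm g hg)
    rw [hT, ← Finset.sum_fiberwise_of_maps_to hmaps]
    calc ∑ L ∈ Finset.Icc 1 (N^10), ∑ g ∈ P.filter (fun g => Finset.univ.lcm g = L),
            ((Finset.univ.lcm g : ℕ):ℝ)⁻¹
        ≤ ∑ L ∈ Finset.Icc 1 (N^10), C0^10 * (L:ℝ) ^ (-(19/20) : ℝ) := by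
          apply Finset.sum_le_sum
          intro L hL
          obtain ⟨hL1, hLN⟩ := Finset.mem_Icc.mp hL
          have hLpos : (0:ℝ) < (L:ℝ) := by exact_mod_cast hL1
          have hin : ∑ g ∈ P.filter (fun g => Finset.univ.lcm g = L),
              ((Finset.univ.lcm g:ℕ):ℝ)⁻¹
              = ((P.filter (fun g => Finset.univ.lcm g = L)).card : ℝ) * ((L:ℕ):ℝ)⁻¹ := by
            rw [Finset.sum_congr rfl (fun g hg => by
              rw [(Finset.mem_filter.mp hg).2]), Finset.sum_const, nsmul_eq_mul]
          rw [hin]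
          have hcard : (P.filter (fun g => Finset.univ.lcm g = L)).card
              ≤ L.divisors.card ^ 10 := by
            calc (P.filter (fun g => Finset.univ.lcm g = L)).card
                ≤ (Fintype.piFinset (fun _ : Fin 10 => L.divisors)).card := by
                  apply Finset.card_le_card
                  intro g hg
                  obtain ⟨_, hgL⟩ := Finset.mem_filter.mp hg
                  rw [Fintype.mem_piFinset]
                  intro i
                  rw [Nat.mem_divisors]
                  exact ⟨hgL ▸ Finset.dvd_lcm (Finset.mem_univ i), by omega⟩
              _ = L.divisors.card ^ 10 := by
                  rw [Fintype.card_piFinset, Finset.prod_const, Finset.card_univ,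
                    Fintype.card_fin]
          have h10 : ((L.divisors.card:ℝ))^10 ≤ C0^10 * (L:ℝ) ^ ((1:ℝ)/20) := by
            calc ((L.divisors.card:ℝ))^10 ≤ (C0 * (L:ℝ)^((200:ℝ)⁻¹))^10 := by
                  apply pow_le_pow_left₀ (by positivity) (st_card_divisors_le L (by omega))
              _ = C0^10 * ((L:ℝ)^((200:ℝ)⁻¹))^10 := by rw [mul_pow]
              _ = C0^10 * (L:ℝ)^((1:ℝ)/20) := by
                  congr 1
                  rw [← Real.rpow_natCast ((L:ℝ)^((200:ℝ)⁻¹)) 10,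
                    ← Real.rpow_mul (le_of_lt hLpos)]
                  norm_num
          calc ((P.filter (fun g => Finset.univ.lcm g = L)).card : ℝ) * ((L:ℕ):ℝ)⁻¹
              ≤ (C0^10 * (L:ℝ)^((1:ℝ)/20)) * ((L:ℝ))⁻¹ := by
                apply mul_le_mul_of_nonneg_right _ (by positivity)
                calc ((P.filter (fun g => Finset.univ.lcm g = L)).card : ℝ)
                    ≤ ((L.divisors.card ^ 10 : ℕ) : ℝ) := by exact_mod_cast hcard
                  _ = ((L.divisors.card:ℝ))^10 := by push_cast; ring
                  _ ≤ C0^10 * (L:ℝ) ^ ((1:ℝ)/20) := h10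
            _ = C0^10 * (L:ℝ)^(-(19/20):ℝ) := by
                rw [mul_assoc]
                congr 1
                rw [show (-(19/20):ℝ) = (1:ℝ)/20 - 1 by norm_num, Real.rpow_sub hLpos,
                  Real.rpow_one]
                ring
      _ = C0^10 * ∑ L ∈ Finset.Icc 1 (N^10), (L:ℝ)^(-(19/20):ℝ) := by
          rw [Finset.mul_sum]
      _ ≤ C0^10 * (20 * ((N^10:ℕ):ℝ)^((20:ℝ)⁻¹)) :=
          mul_le_mul_of_nonneg_left (st_sum_rpow (N^10)) (by positivity)
      _ = 20*C0^10 * (N:ℝ)^((1:ℝ)/2) := by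
          have hx : ((N^10:ℕ):ℝ)^((20:ℝ)⁻¹) = (N:ℝ)^((1:ℝ)/2) := by
            push_cast
            rw [← Real.rpow_natCast (N:ℝ) 10, ← Real.rpow_mul (by positivity)]
            norm_num
          rw [hx]
          ring
  -- conclusion
  have hhalf : (N:ℝ)^((1:ℝ)/2) ≤ (N:ℝ)^((3:ℝ)/4) :=
    Real.rpow_le_rpow_of_exponent_le hN1 (by norm_num)
  have hone : (1:ℝ) ≤ (N:ℝ)^((3:ℝ)/4) := by
    calc (1:ℝ) = 1 ^ ((3:ℝ)/4) := (Real.one_rpow _).symm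
      _ ≤ (N:ℝ)^((3:ℝ)/4) := Real.rpow_le_rpow (by norm_num) hN1 (by norm_num)
  have hC0pow : (1:ℝ) ≤ C0^10 := one_le_pow₀ hC01
  calc (1 / Q) * ∑ n ∈ Finset.Icc (-(M:ℤ)) (M:ℤ),
        ((((Finset.Icc 1 N).filter (fun q : ℕ => (q : ℤ) ∣ n)).card : ℝ)) ^ 10
      ≤ (1 / Q) * (2*Q*T + (N:ℝ)^10) := by
        apply mul_le_mul_of_nonneg_left step4 (by positivity)
    _ = 2*T + (N:ℝ)^10/Q := by field_simp
    _ ≤ 2*(20 * C0^10 * (N:ℝ)^((1:ℝ)/2)) + 1 := by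
        have h1 : (N:ℝ)^10/Q ≤ 1 := by rw [div_le_one hQ0]; exact hQ
        linarith
    _ ≤ 40*C0^10*(N:ℝ)^((3:ℝ)/4) + (N:ℝ)^((3:ℝ)/4) := by
        have h2 : 40*C0^10*(N:ℝ)^((1:ℝ)/2) ≤ 40*C0^10*(N:ℝ)^((3:ℝ)/4) := by
          apply mul_le_mul_of_nonneg_left hhalf (by positivity)
        linarith
    _ = (40*C0^10 + 1) * (N:ℝ)^((3:ℝ)/4) := by ring
end

section
/- There is an absolute constant C > 0 such that for every integer N ≥ 1, ∑_{1 ≤ q_1, …, q_{10} ≤ N} 1/lcm(q_1, …, q_{10}) ≤ C N^{3/4}, where the sum is over all 10-tuples of positive integers each at most N. -/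
open Finset

private lemma card_divisors_mul_le (a b : ℕ) :
    (a * b).divisors.card ≤ a.divisors.card * b.divisors.card := by
  rcases eq_or_ne a 0 with rfl | ha
  · simp
  rcases eq_or_ne b 0 with rfl | hb
  · simp
  rw [← Finset.card_product]
  apply Finset.card_le_card_of_injOn (fun d => (Nat.gcd d a, d / Nat.gcd d a))
  · intro d hd
    have hd0 : 0 < d := Nat.pos_of_mem_divisors hd
    have hdvd : d ∣ a * b := (Nat.mem_divisors.mp hd).1
    have hg : 0 < Nat.gcd d a := Nat.gcd_pos_of_pos_left a hd0
    have hga : Nat.gcd d a ∣ a := Nat.gcd_dvd_right d a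
    have hgd : Nat.gcd d a ∣ d := Nat.gcd_dvd_left d a
    have hdb : d / Nat.gcd d a ∣ b := by
      have hco : Nat.Coprime (d / Nat.gcd d a) (a / Nat.gcd d a) :=
        Nat.coprime_div_gcd_div_gcd hg
      have h1 : d / Nat.gcd d a ∣ (a / Nat.gcd d a) * b := by
        have h2 : Nat.gcd d a * (d / Nat.gcd d a) ∣
            Nat.gcd d a * ((a / Nat.gcd d a) * b) := by
          rw [Nat.mul_div_cancel' hgd, ← mul_assoc, Nat.mul_div_cancel' hga]
          exact hdvd
        exact (mul_dvd_mul_iff_left hg.ne').mp h2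
      exact (Nat.Coprime.dvd_of_dvd_mul_left hco h1)
    exact Finset.mem_product.mpr
      ⟨Nat.mem_divisors.mpr ⟨hga, ha⟩, Nat.mem_divisors.mpr ⟨hdb, hb⟩⟩
  · intro d1 h1 d2 h2 heq
    simp only [Prod.mk.injEq] at heq
    obtain ⟨hf, hs⟩ := heq
    have e1 : Nat.gcd d1 a * (d1 / Nat.gcd d1 a) = d1 :=
      Nat.mul_div_cancel' (Nat.gcd_dvd_left _ _)
    have e2 : Nat.gcd d2 a * (d2 / Nat.gcd d2 a) = d2 :=
      Nat.mul_div_cancel' (Nat.gcd_dvd_left _ _)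
    rw [← e1, hs, hf]
    exact e2

private lemma card_divisorsAntidiagonal' (n : ℕ) :
    n.divisorsAntidiagonal.card = n.divisors.card := by
  rw [← Nat.map_div_right_divisors, Finset.card_map]

private lemma Tstep (k X : ℕ) :
    ∑ n ∈ Icc 1 X, (n.divisors.card : ℝ) ^ (k + 1) / n ≤
      (∑ n ∈ Icc 1 X, (n.divisors.card : ℝ) ^ k / n) ^ 2 := by
  have hexp : ∑ n ∈ Icc 1 X, (n.divisors.card : ℝ) ^ (k + 1) / n =
      ∑ n ∈ Icc 1 X, ∑ p ∈ n.divisorsAntidiagonal, (n.divisors.card : ℝ) ^ k / n := by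
    refine Finset.sum_congr rfl fun n hn => ?_
    rw [Finset.sum_const, card_divisorsAntidiagonal', nsmul_eq_mul, pow_succ]
    ring
  rw [hexp]
  have hterm : ∀ n ∈ Icc 1 X, ∀ p ∈ n.divisorsAntidiagonal,
      (n.divisors.card : ℝ) ^ k / n ≤
        ((p.1.divisors.card : ℝ) ^ k / p.1) * ((p.2.divisors.card : ℝ) ^ k / p.2) := by
    intro n hn p hp
    obtain ⟨hpn, hn0⟩ := Nat.mem_divisorsAntidiagonal.mp hp
    have hp1 : 0 < p.1 := Nat.pos_of_ne_zero (Nat.left_ne_zero_of_mem_divisorsAntidiagonal hp)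
    have hp2 : 0 < p.2 := Nat.pos_of_ne_zero (Nat.right_ne_zero_of_mem_divisorsAntidiagonal hp)
    rw [div_mul_div_comm, ← Nat.cast_mul, hpn, ← mul_pow]
    have hc : (n.divisors.card : ℝ) ≤ (p.1.divisors.card : ℝ) * (p.2.divisors.card : ℝ) := by
      rw [← Nat.cast_mul]
      exact_mod_cast hpn ▸ card_divisors_mul_le p.1 p.2
    gcongr
  have hdisj : (↑(Icc 1 X) : Set ℕ).PairwiseDisjoint Nat.divisorsAntidiagonal := by
    intro m _ n _ hmn
    refine Finset.disjoint_left.mpr fun p hpm hpn => hmn ?_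
    rw [← (Nat.mem_divisorsAntidiagonal.mp hpm).1, (Nat.mem_divisorsAntidiagonal.mp hpn).1]
  have hsub : (Icc 1 X).biUnion Nat.divisorsAntidiagonal ⊆ Icc 1 X ×ˢ Icc 1 X := by
    intro p hp
    obtain ⟨n, hn, hpn⟩ := Finset.mem_biUnion.mp hp
    obtain ⟨hmul, hn0⟩ := Nat.mem_divisorsAntidiagonal.mp hpn
    have h1 : 0 < p.1 := Nat.pos_of_ne_zero (Nat.left_ne_zero_of_mem_divisorsAntidiagonal hpn)
    have h2 : 0 < p.2 := Nat.pos_of_ne_zero (Nat.right_ne_zero_of_mem_divisorsAntidiagonal hpn)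
    have hnX : n ≤ X := (Finset.mem_Icc.mp hn).2
    refine Finset.mem_product.mpr ⟨Finset.mem_Icc.mpr ⟨h1, ?_⟩, Finset.mem_Icc.mpr ⟨h2, ?_⟩⟩
    · exact le_trans (Nat.le_of_dvd (Nat.pos_of_ne_zero hn0) ⟨p.2, hmul.symm⟩) hnX
    · exact le_trans (Nat.le_of_dvd (Nat.pos_of_ne_zero hn0) ⟨p.1, by rw [← hmul, mul_comm]⟩) hnX
  calc ∑ n ∈ Icc 1 X, ∑ p ∈ n.divisorsAntidiagonal, (n.divisors.card : ℝ) ^ k / n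
      ≤ ∑ n ∈ Icc 1 X, ∑ p ∈ n.divisorsAntidiagonal,
          ((p.1.divisors.card : ℝ) ^ k / p.1) * ((p.2.divisors.card : ℝ) ^ k / p.2) :=
        Finset.sum_le_sum fun n hn => Finset.sum_le_sum (hterm n hn)
    _ = ∑ p ∈ (Icc 1 X).biUnion Nat.divisorsAntidiagonal,
          ((p.1.divisors.card : ℝ) ^ k / p.1) * ((p.2.divisors.card : ℝ) ^ k / p.2) :=
        (Finset.sum_biUnion hdisj).symm
    _ ≤ ∑ p ∈ Icc 1 X ×ˢ Icc 1 X,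
          ((p.1.divisors.card : ℝ) ^ k / p.1) * ((p.2.divisors.card : ℝ) ^ k / p.2) :=
        Finset.sum_le_sum_of_subset_of_nonneg hsub (fun p _ _ => by positivity)
    _ = (∑ n ∈ Icc 1 X, (n.divisors.card : ℝ) ^ k / n) ^ 2 := by
        rw [Finset.sum_product, sq, Finset.sum_mul_sum]

private lemma Tnonneg (k X : ℕ) : 0 ≤ ∑ n ∈ Icc 1 X, (n.divisors.card : ℝ) ^ k / n :=
  Finset.sum_nonneg fun n _ => by positivity

private lemma Tbound (X : ℕ) (k : ℕ) :
    ∑ n ∈ Icc 1 X, (n.divisors.card : ℝ) ^ k / n ≤ (1 + Real.log X) ^ (2 ^ k) := by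
  have hH : ∑ n ∈ Icc 1 X, (n.divisors.card : ℝ) ^ 0 / n ≤ 1 + Real.log X := by
    have := harmonic_le_one_add_log X
    rw [harmonic_eq_sum_Icc] at this
    push_cast at this
    calc ∑ n ∈ Icc 1 X, (n.divisors.card : ℝ) ^ 0 / n
        = ∑ n ∈ Icc 1 X, ((n : ℝ))⁻¹ := by
          refine Finset.sum_congr rfl fun n hn => by rw [pow_zero, one_div]
      _ ≤ 1 + Real.log X := this
  have hH0 : 0 ≤ 1 + Real.log X := le_trans (Tnonneg 0 X) hH
  induction k with
  | zero => simpa using hH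
  | succ k ih =>
    calc ∑ n ∈ Icc 1 X, (n.divisors.card : ℝ) ^ (k + 1) / n
        ≤ (∑ n ∈ Icc 1 X, (n.divisors.card : ℝ) ^ k / n) ^ 2 := Tstep k X
      _ ≤ ((1 + Real.log X) ^ (2 ^ k)) ^ 2 := by
          exact pow_le_pow_left₀ (Tnonneg k X) ih 2
      _ = (1 + Real.log X) ^ (2 ^ (k + 1)) := by
          rw [← pow_mul, pow_succ]

set_option maxHeartbeats 1600000 in
/-- there is an absolute `C > 0` such that for every integer `N ≥ 1`,
`∑_{1 ≤ q₁, …, q₁₀ ≤ N} 1/lcm(q₁, …, q₁₀) ≤ C N^{3/4}`. -/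
theorem statement14 : ∃ C : ℝ, 0 < C ∧ ∀ N : ℕ, 1 ≤ N →
    ∑ t ∈ Fintype.piFinset (fun _ : Fin 10 => Finset.Icc 1 N),
        (1 : ℝ) / (((Finset.univ : Finset (Fin 10)).lcm t : ℕ) : ℝ) ≤
      C * (N : ℝ) ^ ((3 : ℝ) / 4) := by
  refine ⟨(1 + 40960 / 3) ^ 1024, pow_pos (by norm_num) 1024, fun N hN => ?_⟩
  have hN0 : 0 < N := hN
  have hM0 : 0 < N ^ 10 := pow_pos hN0 10
  -- every tuple's lcm lands in Icc 1 (N ^ 10)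
  have hmap : ∀ t ∈ Fintype.piFinset (fun _ : Fin 10 => Finset.Icc 1 N),
      (Finset.univ : Finset (Fin 10)).lcm t ∈ Finset.Icc 1 (N ^ 10) := by
    intro t ht
    have hti : ∀ i, t i ∈ Finset.Icc 1 N := fun i => Fintype.mem_piFinset.mp ht i
    have hdvd : (Finset.univ : Finset (Fin 10)).lcm t ∣ ∏ i, t i :=
      Finset.lcm_dvd fun i _ => Finset.dvd_prod_of_mem t (Finset.mem_univ i)
    have hprodpos : 0 < ∏ i, t i :=
      Finset.prod_pos fun i _ => (Finset.mem_Icc.mp (hti i)).1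
    have hprodle : ∏ i, t i ≤ N ^ 10 := by
      calc ∏ i, t i ≤ ∏ _i : Fin 10, N :=
            Finset.prod_le_prod' fun i _ => (Finset.mem_Icc.mp (hti i)).2
        _ = N ^ 10 := by simp
    have hlcm0 : (Finset.univ : Finset (Fin 10)).lcm t ≠ 0 := by
      intro h
      rw [h] at hdvd
      exact hprodpos.ne' (Nat.eq_zero_of_zero_dvd hdvd)
    exact Finset.mem_Icc.mpr ⟨Nat.one_le_iff_ne_zero.mpr hlcm0,
      le_trans (Nat.le_of_dvd hprodpos hdvd) hprodle⟩
  -- group by lcm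
  have h1 : ∑ t ∈ Fintype.piFinset (fun _ : Fin 10 => Finset.Icc 1 N),
      (1 : ℝ) / (((Finset.univ : Finset (Fin 10)).lcm t : ℕ) : ℝ) ≤
      ∑ L ∈ Finset.Icc 1 (N ^ 10), (L.divisors.card : ℝ) ^ 10 / L := by
    rw [← Finset.sum_fiberwise_of_maps_to hmap]
    refine Finset.sum_le_sum fun L hL => ?_
    have hL1 : 1 ≤ L := (Finset.mem_Icc.mp hL).1
    have hLpos : (0 : ℝ) < L := by exact_mod_cast hL1
    set s := (Fintype.piFinset (fun _ : Fin 10 => Finset.Icc 1 N)).filter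
      (fun t => (Finset.univ : Finset (Fin 10)).lcm t = L) with hs
    have hcard : s.card ≤ L.divisors.card ^ 10 := by
      have hsubset : s ⊆ Fintype.piFinset (fun _ : Fin 10 => L.divisors) := by
        intro t ht
        obtain ⟨htp, hlcm⟩ := Finset.mem_filter.mp ht
        refine Fintype.mem_piFinset.mpr fun i => Nat.mem_divisors.mpr ⟨?_, ?_⟩
        · rw [← hlcm]; exact Finset.dvd_lcm (Finset.mem_univ i)
        · omega
      calc s.card ≤ (Fintype.piFinset (fun _ : Fin 10 => L.divisors)).card :=
            Finset.card_le_card hsubset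
        _ = L.divisors.card ^ 10 := by
            rw [Fintype.card_piFinset]; simp
    calc ∑ t ∈ s, (1 : ℝ) / (((Finset.univ : Finset (Fin 10)).lcm t : ℕ) : ℝ)
        = ∑ t ∈ s, (1 : ℝ) / L := by
          refine Finset.sum_congr rfl fun t ht => by
            rw [(Finset.mem_filter.mp ht).2]
      _ = (s.card : ℝ) * (1 / L) := by rw [Finset.sum_const, nsmul_eq_mul]
      _ ≤ ((L.divisors.card : ℝ) ^ 10) * (1 / L) := by
          have hc : (s.card : ℝ) ≤ (L.divisors.card : ℝ) ^ 10 := by exact_mod_cast hcard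
          exact mul_le_mul_of_nonneg_right hc (by positivity)
      _ = (L.divisors.card : ℝ) ^ 10 / L := by ring
  have h2 : ∑ L ∈ Finset.Icc 1 (N ^ 10), (L.divisors.card : ℝ) ^ 10 / L ≤
      (1 + Real.log (N ^ 10 : ℕ)) ^ 1024 := by
    have h := Tbound (N ^ 10) 10
    have e : (2 : ℕ) ^ 10 = 1024 := by norm_num
    rw [e] at h
    exact h
  -- polylog vs power
  have hNR : (1 : ℝ) ≤ (N : ℝ) := by exact_mod_cast hN
  have hNRpos : (0 : ℝ) < N := by linarith
  have hεpos : (0 : ℝ) < 3 / 4096 := by norm_num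
  have hrpos : (0 : ℝ) < (N : ℝ) ^ (3 / 4096 : ℝ) := Real.rpow_pos_of_pos hNRpos _
  have hrge1 : (1 : ℝ) ≤ (N : ℝ) ^ (3 / 4096 : ℝ) := Real.one_le_rpow hNR hεpos.le
  have hlog : Real.log N ≤ (N : ℝ) ^ (3 / 4096 : ℝ) / (3 / 4096) := by
    have h := Real.log_le_sub_one_of_pos hrpos
    rw [Real.log_rpow hNRpos] at h
    rw [le_div_iff₀ hεpos]
    linarith
  have hlogM : Real.log ((N ^ 10 : ℕ) : ℝ) = 10 * Real.log N := by
    push_cast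
    rw [Real.log_pow]
    push_cast
    ring
  have hlogN0 : 0 ≤ Real.log N := Real.log_nonneg hNR
  have hbase : 1 + Real.log ((N ^ 10 : ℕ) : ℝ) ≤
      (1 + 40960 / 3) * (N : ℝ) ^ (3 / 4096 : ℝ) := by
    rw [hlogM]
    have h10 : (10 : ℝ) * Real.log N ≤ (40960 / 3) * ((N : ℝ) ^ (3 / 4096 : ℝ)) := by
      have := mul_le_mul_of_nonneg_left hlog (by norm_num : (0 : ℝ) ≤ 10)
      calc (10 : ℝ) * Real.log N ≤ 10 * ((N : ℝ) ^ (3 / 4096 : ℝ) / (3 / 4096)) := this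
        _ = (40960 / 3) * ((N : ℝ) ^ (3 / 4096 : ℝ)) := by ring
    linarith
  have hbase0 : 0 ≤ 1 + Real.log ((N ^ 10 : ℕ) : ℝ) := by rw [hlogM]; linarith
  have h3 : (1 + Real.log ((N ^ 10 : ℕ) : ℝ)) ^ 1024 ≤
      ((1 + 40960 / 3) * (N : ℝ) ^ (3 / 4096 : ℝ)) ^ 1024 :=
    pow_le_pow_left₀ hbase0 hbase 1024
  have h4 : ((1 + 40960 / 3) * (N : ℝ) ^ (3 / 4096 : ℝ)) ^ 1024 =
      (1 + 40960 / 3) ^ 1024 * (N : ℝ) ^ ((3 : ℝ) / 4) := by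
    rw [mul_pow, ← Real.rpow_natCast ((N : ℝ) ^ (3 / 4096 : ℝ)) 1024,
      ← Real.rpow_mul hNRpos.le]
    norm_num
  calc _ ≤ ∑ L ∈ Finset.Icc 1 (N ^ 10), (L.divisors.card : ℝ) ^ 10 / L := h1
    _ ≤ (1 + Real.log ((N ^ 10 : ℕ) : ℝ)) ^ 1024 := h2
    _ ≤ ((1 + 40960 / 3) * (N : ℝ) ^ (3 / 4096 : ℝ)) ^ 1024 := h3
    _ = (1 + 40960 / 3) ^ 1024 * (N : ℝ) ^ ((3 : ℝ) / 4) := h4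
end
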